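/- arXiv:1206.5550 — 3 statements merged into one kernel-verified Lean document; each statement's English description precedes it below -/
import Mathlib

section
/- Let f, g, h, k : [0,∞) → ℂ² be measurable functions all lying in L²(H,ℝ₊), with f and h locally absolutely continuous satisfying f(x) = f(0) − ∫₀ˣ J H(t) g(t) dt and h(x) = h(0) − ∫₀ˣ J H(t) k(t) dt for all x ≥ 0 (i.e., Jf' = Hg and Jh' = Hk a.e.). Then the limit lim_{x→∞} f(x)* J h(x) exists and equals f(0)* J h(0) + ∫₀^∞ ( f(t)* H(t) k(t) − g(t)* H(t) h(t) ) dt, where both integrals converge absolutely. -/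
open MeasureTheory Matrix Set
open scoped ComplexOrder

noncomputable section

/-- The matrix `J = [[0,-1],[1,0]]`. -/
def Jmat : Matrix (Fin 2) (Fin 2) ℂ := !![0, -1; 1, 0]

/-- `u` is a solution of the canonical system `J u' = z H u` on `[0,∞)`:
`u(x) = u(0) − z ∫₀ˣ J H(t) u(t) dt` for all `x ≥ 0`. -/
def IsSolution (H : ℝ → Matrix (Fin 2) (Fin 2) ℂ) (z : ℂ) (u : ℝ → Fin 2 → ℂ) : Prop :=
  ∀ x ≥ (0:ℝ), u x = u 0 - z • ∫ t in (0:ℝ)..x, (Jmat * H t).mulVec (u t)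

/-- `u` lies in `L²(H, ℝ₊)`: `∫₀^∞ u(x)* H(x) u(x) dx < ∞`. -/
def InL2 (H : ℝ → Matrix (Fin 2) (Fin 2) ℂ) (u : ℝ → Fin 2 → ℂ) : Prop :=
  IntegrableOn (fun x => star (u x) ⬝ᵥ (H x).mulVec (u x)) (Set.Ioi 0)

/-! ### Auxiliary lemmas -/

lemma Jmat_mulVec (w : Fin 2 → ℂ) : Jmat *ᵥ w = ![-(w 1), w 0] := by
  funext i
  fin_cases i <;> simp [Jmat, Matrix.mulVec, dotProduct, Fin.sum_univ_two]

lemma dot_expand (u v : Fin 2 → ℂ) (M : Matrix (Fin 2) (Fin 2) ℂ) :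
    star u ⬝ᵥ (M *ᵥ v) =
      ∑ c : Fin 2 × Fin 2, (starRingEnd ℂ) (u c.1) * (M c.1 c.2 * v c.2) := by
  rw [Fintype.sum_prod_type]
  simp [dotProduct, Matrix.mulVec, Finset.mul_sum, Complex.star_def]
  ring

lemma cs_bound {M : Matrix (Fin 2) (Fin 2) ℂ} (hM : M.PosSemidef) (u v : Fin 2 → ℂ) :
    ‖star u ⬝ᵥ M.mulVec v‖ ≤
      Real.sqrt (Complex.re (star u ⬝ᵥ M.mulVec u)) *
        Real.sqrt (Complex.re (star v ⬝ᵥ M.mulVec v)) := by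
  obtain ⟨S, hS⟩ : ∃ S : Matrix (Fin 2) (Fin 2) ℂ, M = Sᴴ * S := by
    open scoped MatrixOrder Matrix.Norms.L2Operator in
    exact CStarAlgebra.nonneg_iff_eq_star_mul_self.mp hM.nonneg
  have key : ∀ a b : Fin 2 → ℂ,
      star (S.mulVec a) ⬝ᵥ (S.mulVec b) = star a ⬝ᵥ M.mulVec b := by
    intro a b
    rw [Matrix.star_mulVec, ← Matrix.dotProduct_mulVec, Matrix.mulVec_mulVec, hS]
  have inner_eq : ∀ a b : Fin 2 → ℂ,
      (inner ℂ ((WithLp.equiv 2 (Fin 2 → ℂ)).symm a) ((WithLp.equiv 2 (Fin 2 → ℂ)).symm b) : ℂ)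
        = star a ⬝ᵥ b := by
    intro a b
    rw [PiLp.inner_apply]
    simp [RCLike.inner_apply, dotProduct, Complex.star_def, WithLp.equiv_symm_apply, PiLp.toLp_apply,
      mul_comm]
  set a' := (WithLp.equiv 2 (Fin 2 → ℂ)).symm (S.mulVec u) with ha'
  set b' := (WithLp.equiv 2 (Fin 2 → ℂ)).symm (S.mulVec v) with hb'
  have h1 : star u ⬝ᵥ M.mulVec v = (inner ℂ a' b' : ℂ) := by
    rw [ha', hb', inner_eq, key]
  have h2 : ‖a'‖ = Real.sqrt (Complex.re (star u ⬝ᵥ M.mulVec u)) := by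
    rw [@norm_eq_sqrt_re_inner ℂ]
    congr 1
    rw [ha', inner_eq, key]
    rfl
  have h3 : ‖b'‖ = Real.sqrt (Complex.re (star v ⬝ᵥ M.mulVec v)) := by
    rw [@norm_eq_sqrt_re_inner ℂ]
    congr 1
    rw [hb', inner_eq, key]
    rfl
  rw [h1, ← h2, ← h3]
  exact norm_inner_le_norm a' b'

lemma re_nonneg_of_psd {M : Matrix (Fin 2) (Fin 2) ℂ} (hM : M.PosSemidef) (u : Fin 2 → ℂ) :
    0 ≤ Complex.re (star u ⬝ᵥ M.mulVec u) := by
  have := hM.dotProduct_mulVec_nonneg u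
  rw [Complex.le_def] at this
  simpa using this.1

lemma cs_bound' {M : Matrix (Fin 2) (Fin 2) ℂ} (hM : M.PosSemidef) (u v : Fin 2 → ℂ) :
    ‖star u ⬝ᵥ M.mulVec v‖ ≤
      (Complex.re (star u ⬝ᵥ M.mulVec u) + Complex.re (star v ⬝ᵥ M.mulVec v)) / 2 := by
  refine (cs_bound hM u v).trans ?_
  have h1 := re_nonneg_of_psd hM u
  have h2 := re_nonneg_of_psd hM v
  nlinarith [sq_nonneg (Real.sqrt (Complex.re (star u ⬝ᵥ M.mulVec u)) -
      Real.sqrt (Complex.re (star v ⬝ᵥ M.mulVec v))),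
    Real.sq_sqrt h1, Real.sq_sqrt h2, Real.sqrt_nonneg (Complex.re (star u ⬝ᵥ M.mulVec u)),
    Real.sqrt_nonneg (Complex.re (star v ⬝ᵥ M.mulVec v))]

lemma meas_mulVec {H : ℝ → Matrix (Fin 2) (Fin 2) ℂ}
    (hmeas : ∀ i j, Measurable fun x => H x i j) {v : ℝ → Fin 2 → ℂ} (hv : Measurable v)
    (i : Fin 2) : Measurable fun t => ((H t).mulVec (v t)) i := by
  simp only [Matrix.mulVec, dotProduct, Fin.sum_univ_two]
  exact ((hmeas i 0).mul ((measurable_pi_apply 0).comp hv)).add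
    ((hmeas i 1).mul ((measurable_pi_apply 1).comp hv))

lemma meas_dot {H : ℝ → Matrix (Fin 2) (Fin 2) ℂ}
    (hmeas : ∀ i j, Measurable fun x => H x i j) {u v : ℝ → Fin 2 → ℂ}
    (hu : Measurable u) (hv : Measurable v) :
    Measurable fun t => star (u t) ⬝ᵥ (H t).mulVec (v t) := by
  simp only [dotProduct, Pi.star_apply, Fin.sum_univ_two]
  have m0 : Measurable fun t => star (u t 0) :=
    Complex.continuous_conj.measurable.comp ((measurable_pi_apply 0).comp hu)
  have m1 : Measurable fun t => star (u t 1) :=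
    Complex.continuous_conj.measurable.comp ((measurable_pi_apply 1).comp hu)
  exact (m0.mul (meas_mulVec hmeas hv 0)).add (m1.mul (meas_mulVec hmeas hv 1))

lemma IntegrableOn.conj' {p : ℝ → ℂ} {s : Set ℝ} (hp : IntegrableOn p s) :
    IntegrableOn (fun t => (starRingEnd ℂ) (p t)) s := by
  refine Integrable.mono hp ?_ ?_
  · exact Complex.continuous_conj.comp_aestronglyMeasurable hp.1
  · exact Filter.Eventually.of_forall fun t => by simp

lemma alg_id {M : Matrix (Fin 2) (Fin 2) ℂ} (hM : Mᴴ = M) (fv gv hv kv : Fin 2 → ℂ) :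
    star ((Jmat * M).mulVec gv) ⬝ᵥ Jmat.mulVec hv
      + star fv ⬝ᵥ Jmat.mulVec ((Jmat * M).mulVec kv)
      = -(star fv ⬝ᵥ M.mulVec kv - star gv ⬝ᵥ M.mulVec hv) := by
  have hc : ∀ i j, (starRingEnd ℂ) (M i j) = M j i := by
    intro i j
    conv_rhs => rw [← hM]
    simp [Matrix.conjTranspose_apply]
  simp [dotProduct, Matrix.mulVec, Matrix.mul_apply, Pi.star_apply,
    Fin.sum_univ_two, Jmat, Complex.star_def, Matrix.vecMul, map_add, map_neg,
    _root_.map_mul, hc]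
  ring

lemma fubini_mul {p q : ℝ → ℂ} {x : ℝ}
    (hp : IntegrableOn p (Ioc 0 x)) (hq : IntegrableOn q (Ioc 0 x)) :
    (∫ s in Ioc (0:ℝ) x, p s) * (∫ t in Ioc (0:ℝ) x, q t)
      = (∫ t in Ioc (0:ℝ) x, (∫ s in Ioc (0:ℝ) t, p s) * q t)
        + (∫ t in Ioc (0:ℝ) x, p t * (∫ s in Ioc (0:ℝ) t, q s)) := by
  set μ := volume.restrict (Ioc (0:ℝ) x) with hμ
  set T : Set (ℝ × ℝ) := {z : ℝ × ℝ | z.1 < z.2} with hTdef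
  have hT : MeasurableSet T := measurableSet_lt measurable_fst measurable_snd
  have hG : Integrable (fun z : ℝ × ℝ => p z.1 * q z.2) (μ.prod μ) := hp.mul_prod hq
  have h1 : Integrable (T.indicator fun z : ℝ × ℝ => p z.1 * q z.2) (μ.prod μ) :=
    hG.indicator hT
  have h2 : Integrable (Tᶜ.indicator fun z : ℝ × ℝ => p z.1 * q z.2) (μ.prod μ) :=
    hG.indicator hT.compl
  have hsplit : (∫ s in Ioc (0:ℝ) x, p s) * (∫ t in Ioc (0:ℝ) x, q t)
      = (∫ z, T.indicator (fun z : ℝ × ℝ => p z.1 * q z.2) z ∂(μ.prod μ))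
        + ∫ z, Tᶜ.indicator (fun z : ℝ × ℝ => p z.1 * q z.2) z ∂(μ.prod μ) := by
    rw [← integral_add h1 h2, ← integral_prod_mul p q]
    congr 1
    funext z
    exact (congrFun (Set.indicator_self_add_compl T fun z : ℝ × ℝ => p z.1 * q z.2) z).symm
  have e1 : (∫ z, T.indicator (fun z : ℝ × ℝ => p z.1 * q z.2) z ∂(μ.prod μ))
      = ∫ t in Ioc (0:ℝ) x, (∫ s in Ioc (0:ℝ) t, p s) * q t := by
    rw [integral_prod_symm _ h1]
    apply setIntegral_congr_fun measurableSet_Ioc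
    intro t ht
    show (∫ s, T.indicator (fun z : ℝ × ℝ => p z.1 * q z.2) (s, t) ∂μ)
      = (∫ s in Ioc (0:ℝ) t, p s) * q t
    have inner1 : (fun s => T.indicator (fun z : ℝ × ℝ => p z.1 * q z.2) (s, t))
        = (Iio t).indicator (fun s => p s * q t) := by
      funext s
      simp only [Set.indicator_apply, hTdef, Set.mem_setOf_eq, Set.mem_Iio]
    rw [inner1, integral_indicator measurableSet_Iio, hμ,
      Measure.restrict_restrict measurableSet_Iio]
    have hset : Iio t ∩ Ioc 0 x = Ioo 0 t := by
      ext y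
      simp only [mem_inter_iff, mem_Iio, mem_Ioc, mem_Ioo]
      constructor
      · rintro ⟨h1, h2, h3⟩; exact ⟨h2, h1⟩
      · rintro ⟨h1, h2⟩; exact ⟨h2, h1, h2.le.trans ht.2⟩
    rw [hset, integral_mul_const, ← integral_Ioc_eq_integral_Ioo]
  have e2 : (∫ z, Tᶜ.indicator (fun z : ℝ × ℝ => p z.1 * q z.2) z ∂(μ.prod μ))
      = ∫ t in Ioc (0:ℝ) x, p t * (∫ s in Ioc (0:ℝ) t, q s) := by
    rw [integral_prod _ h2]
    apply setIntegral_congr_fun measurableSet_Ioc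
    intro s hs
    show (∫ t, Tᶜ.indicator (fun z : ℝ × ℝ => p z.1 * q z.2) (s, t) ∂μ)
      = p s * ∫ t in Ioc (0:ℝ) s, q t
    have inner2 : (fun t => Tᶜ.indicator (fun z : ℝ × ℝ => p z.1 * q z.2) (s, t))
        = (Iic s).indicator (fun t => p s * q t) := by
      funext t
      simp only [Set.indicator_apply, hTdef, Set.mem_compl_iff, Set.mem_setOf_eq, Set.mem_Iic,
        not_lt]
    rw [inner2, integral_indicator measurableSet_Iic, hμ,
      Measure.restrict_restrict measurableSet_Iic]
    have hset : Iic s ∩ Ioc 0 x = Ioc 0 s := by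
      ext y
      simp only [mem_inter_iff, mem_Iic, mem_Ioc]
      constructor
      · rintro ⟨h1, h2, h3⟩; exact ⟨h2, h1⟩
      · rintro ⟨h1, h2⟩; exact ⟨h2, h1, h2.trans hs.2⟩
    rw [hset, integral_const_mul]
  rw [hsplit, e1, e2]

lemma ibp_pair {x : ℝ} (hx : 0 ≤ x) {p q α β : ℝ → ℂ} {a b : ℂ}
    (hp : IntegrableOn p (Ioc 0 x)) (hq : IntegrableOn q (Ioc 0 x))
    (hα : ∀ t ∈ Icc (0:ℝ) x, α t = a - ∫ s in (0:ℝ)..t, p s)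
    (hβ : ∀ t ∈ Icc (0:ℝ) x, β t = b - ∫ s in (0:ℝ)..t, q s) :
    α x * β x = a * b - ∫ t in (0:ℝ)..x, (p t * β t + α t * q t) := by
  have huIcc : uIcc (0:ℝ) x = Icc 0 x := uIcc_of_le hx
  have hpIcc : IntegrableOn p (uIcc (0:ℝ) x) := by
    rw [huIcc, integrableOn_Icc_iff_integrableOn_Ioc]; exact hp
  have hqIcc : IntegrableOn q (uIcc (0:ℝ) x) := by
    rw [huIcc, integrableOn_Icc_iff_integrableOn_Ioc]; exact hq
  have hpI : IntervalIntegrable p volume 0 x :=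
    (intervalIntegrable_iff_integrableOn_Ioc_of_le hx).2 hp
  have hqI : IntervalIntegrable q volume 0 x :=
    (intervalIntegrable_iff_integrableOn_Ioc_of_le hx).2 hq
  have contA : ContinuousOn (fun t => ∫ s in (0:ℝ)..t, p s) (uIcc (0:ℝ) x) :=
    intervalIntegral.continuousOn_primitive_interval hpIcc
  have contB : ContinuousOn (fun t => ∫ s in (0:ℝ)..t, q s) (uIcc (0:ℝ) x) :=
    intervalIntegral.continuousOn_primitive_interval hqIcc
  have hcong : ∫ t in (0:ℝ)..x, (p t * β t + α t * q t)
      = ∫ t in (0:ℝ)..x, (p t * (b - ∫ s in (0:ℝ)..t, q s)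
          + (a - ∫ s in (0:ℝ)..t, p s) * q t) := by
    apply intervalIntegral.integral_congr
    intro t ht
    rw [huIcc] at ht
    simp only [hα t ht, hβ t ht]
  rw [hcong, hα x ⟨hx, le_refl x⟩, hβ x ⟨hx, le_refl x⟩]
  have I1 : IntervalIntegrable (fun t => p t * (b - ∫ s in (0:ℝ)..t, q s)) volume 0 x :=
    hpI.mul_continuousOn (continuousOn_const.sub contB)
  have I2 : IntervalIntegrable (fun t => (a - ∫ s in (0:ℝ)..t, p s) * q t) volume 0 x :=
    hqI.continuousOn_mul (continuousOn_const.sub contA)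
  have IpB : IntervalIntegrable (fun t => p t * ∫ s in (0:ℝ)..t, q s) volume 0 x :=
    hpI.mul_continuousOn contB
  have IAq : IntervalIntegrable (fun t => (∫ s in (0:ℝ)..t, p s) * q t) volume 0 x :=
    hqI.continuousOn_mul contA
  rw [intervalIntegral.integral_add I1 I2]
  have e1 : ∫ t in (0:ℝ)..x, p t * (b - ∫ s in (0:ℝ)..t, q s)
      = (∫ t in (0:ℝ)..x, p t) * b - ∫ t in (0:ℝ)..x, p t * ∫ s in (0:ℝ)..t, q s := by
    have : (fun t => p t * (b - ∫ s in (0:ℝ)..t, q s))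
        = fun t => p t * b - p t * ∫ s in (0:ℝ)..t, q s := by funext t; ring
    rw [this, intervalIntegral.integral_sub (hpI.mul_const b) IpB,
      intervalIntegral.integral_mul_const]
  have e2 : ∫ t in (0:ℝ)..x, (a - ∫ s in (0:ℝ)..t, p s) * q t
      = a * (∫ t in (0:ℝ)..x, q t) - ∫ t in (0:ℝ)..x, (∫ s in (0:ℝ)..t, p s) * q t := by
    have : (fun t => (a - ∫ s in (0:ℝ)..t, p s) * q t)
        = fun t => a * q t - (∫ s in (0:ℝ)..t, p s) * q t := by funext t; ring
    rw [this, intervalIntegral.integral_sub (hqI.const_mul a) IAq,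
      intervalIntegral.integral_const_mul]
  rw [e1, e2]
  have hAB : (∫ t in (0:ℝ)..x, p t) * (∫ t in (0:ℝ)..x, q t)
      = (∫ t in (0:ℝ)..x, (∫ s in (0:ℝ)..t, p s) * q t)
        + (∫ t in (0:ℝ)..x, p t * ∫ s in (0:ℝ)..t, q s) := by
    have c1 : ∫ t in (0:ℝ)..x, (∫ s in (0:ℝ)..t, p s) * q t
        = ∫ t in Ioc (0:ℝ) x, (∫ s in Ioc (0:ℝ) t, p s) * q t := by
      rw [intervalIntegral.integral_of_le hx]
      apply setIntegral_congr_fun measurableSet_Ioc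
      intro t ht
      simp only [intervalIntegral.integral_of_le ht.1.le]
    have c2 : ∫ t in (0:ℝ)..x, p t * ∫ s in (0:ℝ)..t, q s
        = ∫ t in Ioc (0:ℝ) x, p t * ∫ s in Ioc (0:ℝ) t, q s := by
      rw [intervalIntegral.integral_of_le hx]
      apply setIntegral_congr_fun measurableSet_Ioc
      intro t ht
      simp only [intervalIntegral.integral_of_le ht.1.le]
    rw [intervalIntegral.integral_of_le hx, intervalIntegral.integral_of_le hx, c1, c2]
    exact fubini_mul hp hq
  linear_combination hAB

/-- Lemma on existence of the limit `lim_{x→∞} f(x)* J h(x)` for pairs in the maximal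
relation: if `Jf' = Hg`, `Jh' = Hk` with `f,g,h,k ∈ L²(H,ℝ₊)`, then
`f(x)* J h(x) → f(0)* J h(0) + ∫₀^∞ (f*Hk − g*Hh)`, both integrals converging absolutely. -/
theorem statement3 (H : ℝ → Matrix (Fin 2) (Fin 2) ℂ)
    (hmeas : ∀ i j, Measurable fun x => H x i j)
    (hpsd : ∀ᵐ x ∂(volume.restrict (Set.Ici (0:ℝ))), (H x).PosSemidef)
    (hloc : ∀ i j, LocallyIntegrableOn (fun x => H x i j) (Set.Ici (0:ℝ)))
    (f g h k : ℝ → Fin 2 → ℂ)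
    (hfm : Measurable f) (hgm : Measurable g) (hhm : Measurable h) (hkm : Measurable k)
    (hfL2 : InL2 H f) (hgL2 : InL2 H g) (hhL2 : InL2 H h) (hkL2 : InL2 H k)
    (hf : ∀ x ≥ (0:ℝ), f x = f 0 - ∫ t in (0:ℝ)..x, (Jmat * H t).mulVec (g t))
    (hh : ∀ x ≥ (0:ℝ), h x = h 0 - ∫ t in (0:ℝ)..x, (Jmat * H t).mulVec (k t)) :
    IntegrableOn (fun t => star (f t) ⬝ᵥ (H t).mulVec (k t)) (Set.Ioi 0) ∧
    IntegrableOn (fun t => star (g t) ⬝ᵥ (H t).mulVec (h t)) (Set.Ioi 0) ∧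
    Filter.Tendsto (fun x => star (f x) ⬝ᵥ Jmat.mulVec (h x)) Filter.atTop
      (nhds (star (f 0) ⬝ᵥ Jmat.mulVec (h 0) +
        ∫ t in Set.Ioi (0:ℝ),
          (star (f t) ⬝ᵥ (H t).mulVec (k t) - star (g t) ⬝ᵥ (H t).mulVec (h t)))) := by
  have hpsd' : ∀ᵐ t ∂(volume.restrict (Set.Ioi (0:ℝ))), (H t).PosSemidef :=
    ae_restrict_of_ae_restrict_of_subset Ioi_subset_Ici_self hpsd
  -- Part 1 and 2: integrability via Cauchy-Schwarz
  have hcross : ∀ (u v : ℝ → Fin 2 → ℂ), Measurable u → Measurable v →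
      InL2 H u → InL2 H v →
      IntegrableOn (fun t => star (u t) ⬝ᵥ (H t).mulVec (v t)) (Set.Ioi 0) := by
    intro u v hum hvm huL2 hvL2
    refine Integrable.mono'
      (g := fun t => (Complex.re (star (u t) ⬝ᵥ (H t).mulVec (u t))
        + Complex.re (star (v t) ⬝ᵥ (H t).mulVec (v t))) / 2)
      ?_ (meas_dot hmeas hum hvm).aestronglyMeasurable ?_
    · exact (huL2.re.add hvL2.re).div_const 2
    · filter_upwards [hpsd'] with t ht using cs_bound' ht (u t) (v t)
  have hI1 := hcross f k hfm hkm hfL2 hkL2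
  have hI2 := hcross g h hgm hhm hgL2 hhL2
  refine ⟨hI1, hI2, ?_⟩
  set P := fun t => (Jmat * H t).mulVec (g t) with hPdef
  set Q := fun t => (Jmat * H t).mulVec (k t) with hQdef
  have hJH : ∀ i j, Measurable fun t => (Jmat * H t) i j := by
    intro i j
    simp only [Matrix.mul_apply, Fin.sum_univ_two]
    exact (((hmeas 0 j).const_mul (Jmat i 0)).add ((hmeas 1 j).const_mul (Jmat i 1)))
  have hPm : ∀ i, Measurable fun t => P t i := fun i => meas_mulVec hJH hgm i
  have hQm : ∀ i, Measurable fun t => Q t i := fun i => meas_mulVec hJH hkm i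
  -- integrability of components of H·u
  have hHv : ∀ (v : ℝ → Fin 2 → ℂ), Measurable v → InL2 H v → ∀ x : ℝ, 0 ≤ x → ∀ i,
      IntegrableOn (fun t => ((H t).mulVec (v t)) i) (Ioc 0 x) := by
    intro v hvm hvL2 x hx i
    have hsub : Ioc (0:ℝ) x ⊆ Ici 0 := Ioc_subset_Icc_self.trans Icc_subset_Ici_self
    have hpsdIoc : ∀ᵐ t ∂(volume.restrict (Ioc (0:ℝ) x)), (H t).PosSemidef :=
      ae_restrict_of_ae_restrict_of_subset hsub hpsd
    refine Integrable.mono'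
      (g := fun t => (Complex.re (H t i i)
        + Complex.re (star (v t) ⬝ᵥ (H t).mulVec (v t))) / 2)
      ?_ (meas_mulVec hmeas hvm i).aestronglyMeasurable ?_
    · refine Integrable.div_const (Integrable.add ?_ ?_) 2
      · have hcomp : IntegrableOn (fun t => H t i i) (Icc 0 x) :=
          (hloc i i).integrableOn_compact_subset Icc_subset_Ici_self isCompact_Icc
        exact (hcomp.mono_set Ioc_subset_Icc_self).re
      · exact (hvL2.mono_set (Ioc_subset_Ioi_self)).re
    · filter_upwards [hpsdIoc] with t ht
      have hstar : star ((Pi.single i 1 : Fin 2 → ℂ)) = (Pi.single i 1 : Fin 2 → ℂ) := by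
        funext j
        by_cases hj : j = i <;> simp [Pi.single_apply, hj]
      have h1 : ((H t).mulVec (v t)) i = star ((Pi.single i 1 : Fin 2 → ℂ)) ⬝ᵥ (H t).mulVec (v t) := by
        rw [hstar, single_dotProduct ((H t).mulVec (v t)) (1:ℂ) i, one_mul]
      have h2 : Complex.re (star ((Pi.single i 1 : Fin 2 → ℂ)) ⬝ᵥ (H t).mulVec ((Pi.single i 1 : Fin 2 → ℂ)))
          = Complex.re (H t i i) := by
        rw [hstar, single_dotProduct ((H t).mulVec ((Pi.single i 1 : Fin 2 → ℂ))) (1:ℂ) i, one_mul]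
        simp [Matrix.mulVec, dotProduct_single]
      have := cs_bound' ht ((Pi.single i 1 : Fin 2 → ℂ)) (v t)
      rw [h2] at this
      rw [h1]
      exact this
  have hPi : ∀ x : ℝ, 0 ≤ x → ∀ i, IntegrableOn (fun t => P t i) (Ioc 0 x) := by
    intro x hx
    have base := hHv g hgm hgL2 x hx
    refine Fin.forall_fin_two.2 ⟨?_, ?_⟩
    · have he : (fun t => P t 0) = fun t => -(((H t).mulVec (g t)) 1) := by
        funext t
        rw [hPdef]
        simp only [← Matrix.mulVec_mulVec, Jmat_mulVec]
        simp
      rw [he]; exact (base 1).neg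
    · have he : (fun t => P t 1) = fun t => ((H t).mulVec (g t)) 0 := by
        funext t
        rw [hPdef]
        simp only [← Matrix.mulVec_mulVec, Jmat_mulVec]
        simp
      rw [he]; exact base 0
  have hQi : ∀ x : ℝ, 0 ≤ x → ∀ i, IntegrableOn (fun t => Q t i) (Ioc 0 x) := by
    intro x hx
    have base := hHv k hkm hkL2 x hx
    refine Fin.forall_fin_two.2 ⟨?_, ?_⟩
    · have he : (fun t => Q t 0) = fun t => -(((H t).mulVec (k t)) 1) := by
        funext t
        rw [hQdef]
        simp only [← Matrix.mulVec_mulVec, Jmat_mulVec]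
        simp
      rw [he]; exact (base 1).neg
    · have he : (fun t => Q t 1) = fun t => ((H t).mulVec (k t)) 0 := by
        funext t
        rw [hQdef]
        simp only [← Matrix.mulVec_mulVec, Jmat_mulVec]
        simp
      rw [he]; exact base 0
  -- vector interval integrability
  have hvecInt : ∀ (R : ℝ → Fin 2 → ℂ), (∀ i, Measurable fun t => R t i) →
      (∀ x : ℝ, 0 ≤ x → ∀ i, IntegrableOn (fun t => R t i) (Ioc 0 x)) →
      ∀ x : ℝ, 0 ≤ x → IntervalIntegrable R volume 0 x := by
    intro R hRm hRi x hx
    rw [intervalIntegrable_iff_integrableOn_Ioc_of_le hx]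
    refine Integrable.mono' (g := fun t => ‖R t 0‖ + ‖R t 1‖)
      ((hRi x hx 0).norm.add (hRi x hx 1).norm)
      (measurable_pi_lambda R hRm).aestronglyMeasurable ?_
    refine Filter.Eventually.of_forall fun t => ?_
    show ‖R t‖ ≤ ‖R t 0‖ + ‖R t 1‖
    refine (pi_norm_le_iff_of_nonneg (by positivity)).2 (Fin.forall_fin_two.2 ⟨?_, ?_⟩)
    · linarith [norm_nonneg (R t 1)]
    · linarith [norm_nonneg (R t 0)]
  have hPvec : ∀ x : ℝ, 0 ≤ x → IntervalIntegrable P volume 0 x := hvecInt P hPm hPi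
  have hQvec : ∀ x : ℝ, 0 ≤ x → IntervalIntegrable Q volume 0 x := hvecInt Q hQm hQi
  -- component formulas
  have hcomp : ∀ (u : ℝ → Fin 2 → ℂ) (R : ℝ → Fin 2 → ℂ),
      (∀ x ≥ (0:ℝ), u x = u 0 - ∫ t in (0:ℝ)..x, R t) →
      (∀ x : ℝ, 0 ≤ x → IntervalIntegrable R volume 0 x) →
      ∀ x : ℝ, 0 ≤ x → ∀ i, u x i = u 0 i - ∫ t in (0:ℝ)..x, R t i := by
    intro u R hu hR x hx i
    have h1 := congrFun (hu x hx) i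
    rw [h1, Pi.sub_apply]
    congr 1
    have := (ContinuousLinearMap.proj (R := ℂ) (φ := fun _ : Fin 2 => ℂ)
      i).intervalIntegral_comp_comm (hR x hx)
    simpa using this.symm
  have hfc := hcomp f P hf hPvec
  have hhc := hcomp h Q hh hQvec
  -- the key identity
  have key : ∀ x : ℝ, 0 ≤ x → star (f x) ⬝ᵥ Jmat.mulVec (h x)
      = star (f 0) ⬝ᵥ Jmat.mulVec (h 0)
        + ∫ t in (0:ℝ)..x,
            (star (f t) ⬝ᵥ (H t).mulVec (k t) - star (g t) ⬝ᵥ (H t).mulVec (h t)) := by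
    intro x hx
    have hc : ∀ c : Fin 2 × Fin 2,
        (starRingEnd ℂ) (f x c.1) * (Jmat c.1 c.2 * h x c.2)
          = (starRingEnd ℂ) (f 0 c.1) * (Jmat c.1 c.2 * h 0 c.2)
            - ∫ t in (0:ℝ)..x, ((starRingEnd ℂ) (P t c.1) * (Jmat c.1 c.2 * h t c.2)
                + (starRingEnd ℂ) (f t c.1) * (Jmat c.1 c.2 * Q t c.2)) := by
      intro c
      refine ibp_pair hx (p := fun t => (starRingEnd ℂ) (P t c.1))
        (q := fun t => Jmat c.1 c.2 * Q t c.2)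
        (α := fun t => (starRingEnd ℂ) (f t c.1))
        (β := fun t => Jmat c.1 c.2 * h t c.2)
        (a := (starRingEnd ℂ) (f 0 c.1)) (b := Jmat c.1 c.2 * h 0 c.2)
        (IntegrableOn.conj' (hPi x hx c.1)) ((hQi x hx c.2).const_mul (Jmat c.1 c.2)) ?_ ?_
      · intro t ht
        beta_reduce
        rw [hfc t ht.1 c.1, map_sub]
        congr 1
        rw [intervalIntegral.integral_of_le ht.1, intervalIntegral.integral_of_le ht.1]
        exact (integral_conj).symm
      · intro t ht
        beta_reduce
        rw [hhc t ht.1 c.2, mul_sub]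
        congr 1
        exact (intervalIntegral.integral_const_mul _ _).symm
    -- integrability of the integrands
    have hInt : ∀ c : Fin 2 × Fin 2,
        IntervalIntegrable (fun t => (starRingEnd ℂ) (P t c.1) * (Jmat c.1 c.2 * h t c.2)
          + (starRingEnd ℂ) (f t c.1) * (Jmat c.1 c.2 * Q t c.2)) volume 0 x := by
      intro c
      have huIcc : uIcc (0:ℝ) x = Icc 0 x := uIcc_of_le hx
      have hpc : IntegrableOn (fun t => (starRingEnd ℂ) (P t c.1)) (Ioc 0 x) :=
        IntegrableOn.conj' (hPi x hx c.1)
      have hqc : IntegrableOn (fun t => Jmat c.1 c.2 * Q t c.2) (Ioc 0 x) :=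
        (hQi x hx c.2).const_mul (Jmat c.1 c.2)
      have hpcI : IntervalIntegrable (fun t => (starRingEnd ℂ) (P t c.1)) volume 0 x :=
        (intervalIntegrable_iff_integrableOn_Ioc_of_le hx).2 hpc
      have hqcI : IntervalIntegrable (fun t => Jmat c.1 c.2 * Q t c.2) volume 0 x :=
        (intervalIntegrable_iff_integrableOn_Ioc_of_le hx).2 hqc
      have hpcIcc : IntegrableOn (fun t => (starRingEnd ℂ) (P t c.1)) (uIcc (0:ℝ) x) := by
        rw [huIcc, integrableOn_Icc_iff_integrableOn_Ioc]; exact hpc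
      have hqcIcc : IntegrableOn (fun t => Jmat c.1 c.2 * Q t c.2) (uIcc (0:ℝ) x) := by
        rw [huIcc, integrableOn_Icc_iff_integrableOn_Ioc]; exact hqc
      have contA : ContinuousOn (fun t => ∫ s in (0:ℝ)..t, (starRingEnd ℂ) (P s c.1))
          (uIcc (0:ℝ) x) := intervalIntegral.continuousOn_primitive_interval hpcIcc
      have contB : ContinuousOn (fun t => ∫ s in (0:ℝ)..t, Jmat c.1 c.2 * Q s c.2)
          (uIcc (0:ℝ) x) := intervalIntegral.continuousOn_primitive_interval hqcIcc
      have base : IntervalIntegrable (fun t =>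
          (starRingEnd ℂ) (P t c.1) * ((Jmat c.1 c.2 * h 0 c.2)
              - ∫ s in (0:ℝ)..t, Jmat c.1 c.2 * Q s c.2)
          + ((starRingEnd ℂ) (f 0 c.1) - ∫ s in (0:ℝ)..t, (starRingEnd ℂ) (P s c.1))
              * (Jmat c.1 c.2 * Q t c.2)) volume 0 x :=
        (hpcI.mul_continuousOn (continuousOn_const.sub contB)).add
          (hqcI.continuousOn_mul (continuousOn_const.sub contA))
      rw [intervalIntegrable_iff_integrableOn_Ioc_of_le hx] at base ⊢
      refine base.congr_fun (fun t ht => ?_) measurableSet_Ioc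
      beta_reduce
      have ht' : t ∈ Icc (0:ℝ) x := Ioc_subset_Icc_self ht
      have e1 : (starRingEnd ℂ) (f t c.1)
          = (starRingEnd ℂ) (f 0 c.1) - ∫ s in (0:ℝ)..t, (starRingEnd ℂ) (P s c.1) := by
        rw [hfc t ht'.1 c.1, map_sub]
        congr 1
        rw [intervalIntegral.integral_of_le ht'.1, intervalIntegral.integral_of_le ht'.1]
        exact (integral_conj).symm
      have e2 : Jmat c.1 c.2 * h t c.2
          = Jmat c.1 c.2 * h 0 c.2 - ∫ s in (0:ℝ)..t, Jmat c.1 c.2 * Q s c.2 := by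
        rw [hhc t ht'.1 c.2, mul_sub]
        congr 1
        exact (intervalIntegral.integral_const_mul _ _).symm
      simp only [← e1, ← e2]
    -- assemble
    have step1 : star (f x) ⬝ᵥ Jmat.mulVec (h x)
        = star (f 0) ⬝ᵥ Jmat.mulVec (h 0)
          - ∫ t in (0:ℝ)..x,
              (star (P t) ⬝ᵥ Jmat.mulVec (h t) + star (f t) ⬝ᵥ Jmat.mulVec (Q t)) := by
      rw [dot_expand (f x) (h x) Jmat]
      rw [Finset.sum_congr rfl fun c _ => hc c]
      rw [Finset.sum_sub_distrib]
      rw [← intervalIntegral.integral_finset_sum fun c _ => hInt c]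
      rw [← dot_expand (f 0) (h 0) Jmat]
      congr 1
      apply intervalIntegral.integral_congr
      intro t _
      beta_reduce
      rw [Finset.sum_add_distrib, ← dot_expand (P t) (h t) Jmat, ← dot_expand (f t) (Q t) Jmat]
    rw [step1]
    have hae : ∀ᵐ t ∂volume, t ∈ Set.uIoc (0:ℝ) x →
        (star (P t) ⬝ᵥ Jmat.mulVec (h t) + star (f t) ⬝ᵥ Jmat.mulVec (Q t))
          = -((star (f t) ⬝ᵥ (H t).mulVec (k t) - star (g t) ⬝ᵥ (H t).mulVec (h t))) := by
      have hps := (ae_restrict_iff' measurableSet_Ici).1 hpsd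
      filter_upwards [hps] with t hpt htI
      rw [uIoc_of_le hx] at htI
      have ht0 : t ∈ Ici (0:ℝ) := le_of_lt htI.1
      exact alg_id (hpt ht0).1 (f t) (g t) (h t) (k t)
    rw [intervalIntegral.integral_congr_ae hae, intervalIntegral.integral_neg, sub_neg_eq_add]
  -- conclude
  have hIoiInt : IntegrableOn
      (fun t => star (f t) ⬝ᵥ (H t).mulVec (k t) - star (g t) ⬝ᵥ (H t).mulVec (h t))
      (Set.Ioi 0) := hI1.sub hI2
  have htend := intervalIntegral_tendsto_integral_Ioi 0 hIoiInt Filter.tendsto_id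
  refine Filter.Tendsto.congr' ?_ (tendsto_const_nhds.add htend)
  filter_upwards [Filter.eventually_ge_atTop (0:ℝ)] with x hx
  exact (key x hx).symm
end
end

section
/- Fix N > 0 and z ∈ ℂ. Let f, w : [0,N] → ℂ² be solutions of Ju' = zHu on [0,N], let f̃, w̃ : [0,N] → ℂ² be solutions of Ju' = z̄Hu on [0,N], and assume the matrix identity f(x) w̃(x)* − w(x) f̃(x)* = J holds for all x ∈ [0,N]. Let h : [0,N] → ℂ² be measurable with ∫₀ᴺ |w̃(t)* H(t) h(t)| dt < ∞ and ∫₀ᴺ |f̃(t)* H(t) h(t)| dt < ∞, and define y(x) = f(x) ∫₀ˣ w̃(t)* H(t) h(t) dt + w(x) ∫ₓᴺ f̃(t)* H(t) h(t) dt. Then y is locally absolutely continuous and solves the inhomogeneous equation J y' = z H y − H h a.e. on [0,N]; equivalently y(x) = y(0) + ∫₀ˣ (−J)( z H(t) y(t) − H(t) h(t) ) dt for all x ∈ [0,N]. -/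
open MeasureTheory Matrix Set
open scoped ComplexOrder

noncomputable section

/-- `u` is a solution of the canonical system `J u' = z H u` on `[0,N]`:
`u(x) = u(0) − z ∫₀ˣ J H(t) u(t) dt` for all `x ∈ [0,N]`. -/
def IsSolutionOn (N : ℝ) (H : ℝ → Matrix (Fin 2) (Fin 2) ℂ) (z : ℂ)
    (u : ℝ → Fin 2 → ℂ) : Prop :=
  ∀ x ∈ Set.Icc (0:ℝ) N, u x = u 0 - z • ∫ t in (0:ℝ)..x, (Jmat * H t).mulVec (u t)

variable {E : Type*} [NormedAddCommGroup E] [NormedSpace ℂ E] [CompleteSpace E]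

lemma key_fubini (x : ℝ) (hx : 0 ≤ x) (φ : ℝ → ℂ) (ψ : ℝ → E)
    (hφ : IntegrableOn φ (Ioc 0 x)) (hψ : IntegrableOn ψ (Ioc 0 x)) :
    (∫ t in (0:ℝ)..x, φ t) • (∫ t in (0:ℝ)..x, ψ t)
      = (∫ t in (0:ℝ)..x, φ t • ∫ s in (0:ℝ)..t, ψ s)
        + ∫ t in (0:ℝ)..x, (∫ s in (0:ℝ)..t, φ s) • ψ t := by
  set μ : Measure ℝ := volume.restrict (Ioc 0 x) with hμ
  set g : ℝ × ℝ → E := fun p => φ p.1 • ψ p.2 with hg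
  have hgint : Integrable g (μ.prod μ) := hφ.smul_prod hψ
  have hD1 : MeasurableSet {p : ℝ × ℝ | p.2 ≤ p.1} :=
    measurableSet_le measurable_snd measurable_fst
  have hae : ∀ᵐ p ∂(μ.prod μ), p ∈ Ioc (0:ℝ) x ×ˢ Ioc (0:ℝ) x := by
    rw [hμ, Measure.prod_restrict]
    exact ae_restrict_mem (measurableSet_Ioc.prod measurableSet_Ioc)
  -- first term
  have e1 : ∀ t ∈ Ioc (0:ℝ) x,
      (∫ s in (0:ℝ)..t, ψ s) = ∫ s, (Ioc (0:ℝ) t).indicator ψ s ∂μ := by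
    intro t ht
    rw [intervalIntegral.integral_of_le ht.1.le, hμ, integral_indicator measurableSet_Ioc,
      Measure.restrict_restrict measurableSet_Ioc,
      inter_eq_self_of_subset_left (Ioc_subset_Ioc_right ht.2)]
  have e2 : ∀ t ∈ Ioc (0:ℝ) x,
      (∫ s in (0:ℝ)..t, φ s) = ∫ s, (Ioo (0:ℝ) t).indicator φ s ∂μ := by
    intro t ht
    rw [intervalIntegral.integral_of_le ht.1.le, integral_Ioc_eq_integral_Ioo, hμ,
      integral_indicator measurableSet_Ioo,
      Measure.restrict_restrict measurableSet_Ioo,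
      inter_eq_self_of_subset_left ((Ioo_subset_Ioc_self).trans (Ioc_subset_Ioc_right ht.2))]
  have hGeq : (fun p : ℝ × ℝ => φ p.1 • (Ioc (0:ℝ) p.1).indicator ψ p.2)
      =ᵐ[μ.prod μ] ({p : ℝ × ℝ | p.2 ≤ p.1}).indicator g := by
    filter_upwards [hae] with p hp
    by_cases hle : p.2 ≤ p.1
    · simp [Set.indicator_of_mem, Set.mem_Ioc, hle, hp.2.1, hg, Set.mem_setOf_eq]
    · simp [Set.indicator_apply, Set.mem_Ioc, hle, hg, Set.mem_setOf_eq]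
  have hG2eq : (fun p : ℝ × ℝ => ((Ioo (0:ℝ) p.2).indicator φ p.1) • ψ p.2)
      =ᵐ[μ.prod μ] ({p : ℝ × ℝ | p.2 ≤ p.1}ᶜ).indicator g := by
    filter_upwards [hae] with p hp
    by_cases hlt : p.1 < p.2
    · simp [Set.indicator_apply, Set.mem_Ioo, hlt, hp.1.1, hg, Set.mem_setOf_eq, not_le.mpr hlt]
    · simp [Set.indicator_apply, Set.mem_Ioo, hlt, hg, Set.mem_setOf_eq, not_lt.mp hlt]
  have hG : Integrable (fun p : ℝ × ℝ => φ p.1 • (Ioc (0:ℝ) p.1).indicator ψ p.2) (μ.prod μ) :=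
    (integrable_congr hGeq).mpr (hgint.indicator hD1)
  have hG2 : Integrable (fun p : ℝ × ℝ => ((Ioo (0:ℝ) p.2).indicator φ p.1) • ψ p.2) (μ.prod μ) :=
    (integrable_congr hG2eq).mpr (hgint.indicator hD1.compl)
  have h1 : (∫ t in (0:ℝ)..x, φ t • ∫ s in (0:ℝ)..t, ψ s)
      = ∫ p, ({p : ℝ × ℝ | p.2 ≤ p.1}).indicator g p ∂(μ.prod μ) := by
    rw [intervalIntegral.integral_of_le hx, ← integral_congr_ae hGeq, integral_prod _ hG]
    refine integral_congr_ae ?_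
    filter_upwards [ae_restrict_mem measurableSet_Ioc] with t ht
    rw [e1 t ht, integral_smul]
  have h2 : (∫ t in (0:ℝ)..x, (∫ s in (0:ℝ)..t, φ s) • ψ t)
      = ∫ p, ({p : ℝ × ℝ | p.2 ≤ p.1}ᶜ).indicator g p ∂(μ.prod μ) := by
    rw [intervalIntegral.integral_of_le hx, ← integral_congr_ae hG2eq, integral_prod_symm _ hG2]
    refine integral_congr_ae ?_
    filter_upwards [ae_restrict_mem measurableSet_Ioc] with t ht
    rw [e2 t ht, integral_smul_const]
  rw [h1, h2, ← integral_add (hgint.indicator hD1) (hgint.indicator hD1.compl)]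
  have : (fun p => ({p : ℝ × ℝ | p.2 ≤ p.1}).indicator g p
      + ({p : ℝ × ℝ | p.2 ≤ p.1}ᶜ).indicator g p) = g := by
    funext p
    exact Set.indicator_self_add_compl_apply _ g p
  rw [this, integral_prod _ hgint, intervalIntegral.integral_of_le hx,
    intervalIntegral.integral_of_le hx]
  rw [← integral_smul_const]
  refine integral_congr_ae (Filter.Eventually.of_forall fun t => ?_)
  exact (integral_smul (φ t) fun s => ψ s).symm

lemma intOn_smul_cont {x : ℝ} (φ : ℝ → ℂ) (G : ℝ → E)
    (hφ : IntegrableOn φ (Ioc 0 x)) (hG : ContinuousOn G (Icc 0 x)) :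
    IntegrableOn (fun t => φ t • G t) (Ioc 0 x) := by
  obtain ⟨C, hC⟩ := isCompact_Icc.exists_bound_of_continuousOn hG
  have hsm : AEStronglyMeasurable (fun t => φ t • G t) (volume.restrict (Ioc 0 x)) :=
    hφ.aestronglyMeasurable.smul
      ((hG.mono Ioc_subset_Icc_self).aestronglyMeasurable measurableSet_Ioc)
  refine Integrable.mono' (hφ.norm.const_mul C) hsm ?_
  filter_upwards [ae_restrict_mem measurableSet_Ioc] with t ht
  rw [norm_smul]
  calc ‖φ t‖ * ‖G t‖ ≤ ‖φ t‖ * C :=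
        mul_le_mul_of_nonneg_left (hC t (Ioc_subset_Icc_self ht)) (norm_nonneg _)
    _ = C * ‖φ t‖ := mul_comm _ _

lemma cont_smul_intOn {x : ℝ} (F : ℝ → ℂ) (ψ : ℝ → E)
    (hF : ContinuousOn F (Icc 0 x)) (hψ : IntegrableOn ψ (Ioc 0 x)) :
    IntegrableOn (fun t => F t • ψ t) (Ioc 0 x) := by
  obtain ⟨C, hC⟩ := isCompact_Icc.exists_bound_of_continuousOn hF
  have hsm : AEStronglyMeasurable (fun t => F t • ψ t) (volume.restrict (Ioc 0 x)) :=
    ((hF.mono Ioc_subset_Icc_self).aestronglyMeasurable measurableSet_Ioc).smul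
      hψ.aestronglyMeasurable
  refine Integrable.mono' (hψ.norm.const_mul C) hsm ?_
  filter_upwards [ae_restrict_mem measurableSet_Ioc] with t ht
  rw [norm_smul]
  exact mul_le_mul_of_nonneg_right (hC t (Ioc_subset_Icc_self ht)) (norm_nonneg _)

lemma ii {x : ℝ} (hx : (0:ℝ) ≤ x) {E' : Type*} [NormedAddCommGroup E'] (f : ℝ → E')
    (hf : Integrable f (volume.restrict (Ioc 0 x))) : IntervalIntegrable f volume 0 x := by
  rw [intervalIntegrable_iff, uIoc_of_le hx]; exact hf

lemma prod_rule (x : ℝ) (hx : 0 ≤ x) (φ : ℝ → ℂ) (ψ : ℝ → E)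
    (hφ : IntegrableOn φ (Ioc 0 x)) (hψ : IntegrableOn ψ (Ioc 0 x))
    (c : ℂ) (v : E) (F : ℝ → ℂ) (G : ℝ → E)
    (hF : ∀ s ∈ Icc (0:ℝ) x, F s = c + ∫ t in (0:ℝ)..s, φ t)
    (hG : ∀ s ∈ Icc (0:ℝ) x, G s = v + ∫ t in (0:ℝ)..s, ψ t) :
    F x • G x = c • v + ∫ t in (0:ℝ)..x, (φ t • G t + F t • ψ t) := by
  have hIcc : uIcc (0:ℝ) x = Icc 0 x := uIcc_of_le hx
  have hφ' : IntegrableOn φ (uIcc (0:ℝ) x) := by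
    rw [hIcc]; exact (integrableOn_Icc_iff_integrableOn_Ioc).mpr hφ
  have hψ' : IntegrableOn ψ (uIcc (0:ℝ) x) := by
    rw [hIcc]; exact (integrableOn_Icc_iff_integrableOn_Ioc).mpr hψ
  have hΦcont : ContinuousOn (fun t => ∫ s in (0:ℝ)..t, φ s) (Icc 0 x) := by
    rw [← hIcc]; exact intervalIntegral.continuousOn_primitive_interval hφ'
  have hΨcont : ContinuousOn (fun t => ∫ s in (0:ℝ)..t, ψ s) (Icc 0 x) := by
    rw [← hIcc]; exact intervalIntegral.continuousOn_primitive_interval hψ'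
  have i1 : IntervalIntegrable (fun t => φ t • v) volume 0 x := ii hx _ (hφ.smul_const v)
  have i2 : IntervalIntegrable (fun t => φ t • ∫ s in (0:ℝ)..t, ψ s) volume 0 x :=
    ii hx _ (intOn_smul_cont φ _ hφ hΨcont)
  have i3 : IntervalIntegrable (fun t => c • ψ t) volume 0 x := ii hx _ (hψ.smul c)
  have i4 : IntervalIntegrable (fun t => (∫ s in (0:ℝ)..t, φ s) • ψ t) volume 0 x :=
    ii hx _ (cont_smul_intOn _ ψ hΦcont hψ)
  have congr1 : ∫ t in (0:ℝ)..x, (φ t • G t + F t • ψ t)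
      = ∫ t in (0:ℝ)..x, ((φ t • v + φ t • ∫ s in (0:ℝ)..t, ψ s)
          + (c • ψ t + (∫ s in (0:ℝ)..t, φ s) • ψ t)) := by
    refine intervalIntegral.integral_congr fun t ht => ?_
    rw [hIcc] at ht
    rw [hF t ht, hG t ht, smul_add, add_smul]
  rw [hF x ⟨hx, le_rfl⟩, hG x ⟨hx, le_rfl⟩, congr1,
    intervalIntegral.integral_add (i1.add i2) (i3.add i4),
    intervalIntegral.integral_add i1 i2, intervalIntegral.integral_add i3 i4,
    intervalIntegral.integral_smul_const, intervalIntegral.integral_smul,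
    add_smul, smul_add, smul_add, key_fubini x hx φ ψ hφ hψ]
  abel

open Matrix in
lemma norm_mulVec_le (M : Matrix (Fin 2) (Fin 2) ℂ) (v : Fin 2 → ℂ) :
    ‖M.mulVec v‖ ≤ (∑ i, ∑ j, ‖M i j‖) * ‖v‖ := by
  have hK0 : (0:ℝ) ≤ ∑ i, ∑ j, ‖M i j‖ :=
    Finset.sum_nonneg fun i _ => Finset.sum_nonneg fun j _ => norm_nonneg _
  rw [pi_norm_le_iff_of_nonneg (mul_nonneg hK0 (norm_nonneg v))]
  intro i
  calc ‖M.mulVec v i‖ = ‖∑ j, M i j * v j‖ := by simp [Matrix.mulVec, dotProduct]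
    _ ≤ ∑ j, ‖M i j * v j‖ := norm_sum_le _ _
    _ ≤ ∑ j, ‖M i j‖ * ‖v‖ := by
        refine Finset.sum_le_sum fun j _ => ?_
        rw [norm_mul]
        exact mul_le_mul_of_nonneg_left (norm_le_pi_norm v j) (norm_nonneg _)
    _ = (∑ j, ‖M i j‖) * ‖v‖ := (Finset.sum_mul _ _ _).symm
    _ ≤ (∑ i, ∑ j, ‖M i j‖) * ‖v‖ := by
        refine mul_le_mul_of_nonneg_right ?_ (norm_nonneg v)
        exact Finset.single_le_sum (f := fun i => ∑ j, ‖M i j‖)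
          (fun i _ => Finset.sum_nonneg fun j _ => norm_nonneg _) (Finset.mem_univ i)

lemma aesm_mulVec {s : Set ℝ} (M : ℝ → Matrix (Fin 2) (Fin 2) ℂ)
    (hmeas : ∀ i j, Measurable fun t => M t i j) {u : ℝ → Fin 2 → ℂ}
    (hu : AEStronglyMeasurable u (volume.restrict s)) :
    AEStronglyMeasurable (fun t => (M t).mulVec (u t)) (volume.restrict s) := by
  obtain ⟨u', hu'm, hu'eq⟩ := hu
  refine ⟨fun t => (M t).mulVec (u' t), ?_, ?_⟩
  · refine Measurable.stronglyMeasurable ?_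
    rw [measurable_pi_iff]
    intro i
    have : (fun t => (M t).mulVec (u' t) i) = fun t => ∑ j, M t i j * u' t j := by
      funext t; simp [Matrix.mulVec, dotProduct]
    rw [this]
    exact Finset.measurable_sum _ fun j _ =>
      (hmeas i j).mul (measurable_pi_iff.mp hu'm.measurable j)
  · filter_upwards [hu'eq] with t ht
    rw [ht]

lemma integrableOn_mulVec_const {s : Set ℝ} (M : ℝ → Matrix (Fin 2) (Fin 2) ℂ)
    (hmeas : ∀ i j, Measurable fun t => M t i j)
    (hKint : IntegrableOn (fun t => ∑ i, ∑ j, ‖M t i j‖) s) (v : Fin 2 → ℂ) :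
    IntegrableOn (fun t => (M t).mulVec v) s := by
  refine Integrable.mono' (hKint.mul_const ‖v‖) ?_
    (Filter.Eventually.of_forall fun t => norm_mulVec_le _ _)
  refine Measurable.aestronglyMeasurable ?_
  rw [measurable_pi_iff]
  intro i
  have : (fun t => (M t).mulVec v i) = fun t => ∑ j, M t i j * v j := by
    funext t; simp [Matrix.mulVec, dotProduct]
  rw [this]
  exact Finset.measurable_sum _ fun j _ => (hmeas i j).mul measurable_const

lemma bootstrap (N : ℝ) (hN : 0 ≤ N) (M : ℝ → Matrix (Fin 2) (Fin 2) ℂ)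
    (hmeas : ∀ i j, Measurable fun t => M t i j)
    (hint : ∀ i j, IntegrableOn (fun t => M t i j) (Icc 0 N))
    (u : ℝ → Fin 2 → ℂ)
    (hu : ∀ x ∈ Icc (0:ℝ) N, u x = u 0 + ∫ t in (0:ℝ)..x, (M t).mulVec (u t)) :
    ContinuousOn u (Icc 0 N) ∧ IntegrableOn (fun t => (M t).mulVec (u t)) (Ioc 0 N) := by
  set K : ℝ → ℝ := fun t => ∑ i, ∑ j, ‖M t i j‖ with hKdef
  have hK0 : ∀ t, 0 ≤ K t := fun t =>
    Finset.sum_nonneg fun i _ => Finset.sum_nonneg fun j _ => norm_nonneg _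
  have hKint : IntegrableOn K (Icc 0 N) :=
    integrable_finset_sum _ fun i _ => integrable_finset_sum _ fun j _ => (hint i j).norm
  have hKbd : ∀ t (v : Fin 2 → ℂ), ‖(M t).mulVec v‖ ≤ K t * ‖v‖ := fun t v => norm_mulVec_le _ _
  set g : ℝ → Fin 2 → ℂ := fun t => (M t).mulVec (u t) with hgdef
  set S : Set ℝ := {r | r ∈ Icc (0:ℝ) N ∧ IntegrableOn g (Ioc 0 r)} with hSdef
  have hS0 : (0:ℝ) ∈ S := ⟨⟨le_rfl, hN⟩, by rw [Set.Ioc_self]; exact integrableOn_empty⟩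
  have hSb : BddAbove S := ⟨N, fun r hr => hr.1.2⟩
  set c : ℝ := sSup S with hcdef
  have hc0 : 0 ≤ c := le_csSup hSb hS0
  have hcN : c ≤ N := csSup_le ⟨0, hS0⟩ fun r hr => hr.1.2
  have hmem : ∀ r, 0 ≤ r → r < c → r ∈ S := by
    intro r hr0 hrc
    obtain ⟨s, hsS, hrs⟩ := exists_lt_of_lt_csSup ⟨0, hS0⟩ hrc
    exact ⟨⟨hr0, hrs.le.trans hsS.1.2⟩, hsS.2.mono_set (Ioc_subset_Ioc_right hrs.le)⟩
  have hcont : ∀ r ∈ S, ContinuousOn u (Icc 0 r) := by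
    intro r hrS
    have hgr : IntegrableOn g (uIcc 0 r) := by
      rw [uIcc_of_le hrS.1.1]
      exact (integrableOn_Icc_iff_integrableOn_Ioc).mpr hrS.2
    have h1 := (continuousOn_const (c := u 0)).add (intervalIntegral.continuousOn_primitive_interval hgr)
    rw [uIcc_of_le hrS.1.1] at h1
    exact h1.congr fun x hx => hu x ⟨hx.1, hx.2.trans hrS.1.2⟩
  have hiint : ∀ r ∈ S, ∀ r', 0 ≤ r' → r' ≤ r → IntervalIntegrable g volume 0 r' := by
    intro r hrS r' h0 hr'
    exact ii h0 _ (hrS.2.mono_set (Ioc_subset_Ioc_right hr'))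
  have Kii : ∀ r r', 0 ≤ r → r ≤ r' → r' ≤ N → IntervalIntegrable K volume r r' := by
    intro r r' h0 h1 h2
    rw [intervalIntegrable_iff, uIoc_of_le h1]
    exact hKint.mono_set fun t ht => ⟨h0.trans ht.1.le, ht.2.trans h2⟩
  have hcS : c ∈ S := by
    rcases eq_or_lt_of_le hc0 with h0c | h0c
    · rw [← h0c]; exact hS0
    set F : ℝ → ℝ := fun r => ∫ s in (0:ℝ)..r, K s with hFdef
    have hFcont : ContinuousOn F (Icc 0 N) := by
      have h1 : IntegrableOn K (uIcc 0 N) := by rw [uIcc_of_le hN]; exact hKint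
      have h2 := intervalIntegral.continuousOn_primitive_interval h1
      rwa [uIcc_of_le hN] at h2
    have hcmem : c ∈ Icc (0:ℝ) N := ⟨hc0, hcN⟩
    have hFc := hFcont c hcmem
    rw [Metric.continuousWithinAt_iff] at hFc
    obtain ⟨δ, hδ0, hδ⟩ := hFc (1/4) (by norm_num)
    set x₀ : ℝ := max 0 (c - δ/2) with hx₀def
    have hx₀0 : 0 ≤ x₀ := le_max_left _ _
    have hx₀c : x₀ < c := max_lt h0c (by linarith)
    have hx₀S : x₀ ∈ S := hmem x₀ hx₀0 hx₀c
    have hx₀N : x₀ ≤ N := hx₀c.le.trans hcN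
    have hFnear : ∀ r, x₀ ≤ r → r ≤ c → |F r - F c| < 1/4 := by
      intro r h1 h2
      have hrIcc : r ∈ Icc (0:ℝ) N := ⟨hx₀0.trans h1, h2.trans hcN⟩
      apply hδ hrIcc
      rw [Real.dist_eq, abs_sub_lt_iff]
      have h3 : c - δ/2 ≤ x₀ := le_max_right _ _
      constructor <;> linarith
    have hbd2 : ∀ s, x₀ ≤ s → s < c → ‖u s‖ ≤ 2 * ‖u x₀‖ := by
      intro s hx₀s hsc
      have hsS : s ∈ S := hmem s (hx₀0.trans hx₀s) hsc
      have hsN : s ≤ N := hsc.le.trans hcN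
      have hucont : ContinuousOn u (Icc 0 s) := hcont s hsS
      obtain ⟨tm, htm, htmax⟩ := isCompact_Icc.exists_isMaxOn
        (⟨x₀, left_mem_Icc.mpr hx₀s⟩ : (Icc x₀ s).Nonempty)
        ((hucont.mono (Icc_subset_Icc hx₀0 le_rfl)).norm)
      have htm0 : 0 ≤ tm := hx₀0.trans htm.1
      have htms : tm ≤ s := htm.2
      have hx₀tm : x₀ ≤ tm := htm.1
      have hiu : u tm = u x₀ + ∫ t in x₀..tm, g t := by
        have e1 := hu tm ⟨htm0, htms.trans hsN⟩
        have e2 := hu x₀ ⟨hx₀0, hx₀N⟩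
        have hsub := intervalIntegral.integral_interval_sub_left
          (hiint s hsS tm htm0 htms) (hiint s hsS x₀ hx₀0 hx₀s)
        rw [e1, e2, ← hsub]
        abel
      have gii : IntervalIntegrable g volume x₀ tm := by
        rw [intervalIntegrable_iff, uIoc_of_le hx₀tm]
        exact hsS.2.mono_set (Ioc_subset_Ioc hx₀0 htms)
      have hKg : ∀ t ∈ Icc x₀ tm, ‖g t‖ ≤ K t * ‖u tm‖ := by
        intro t ht
        calc ‖g t‖ ≤ K t * ‖u t‖ := hKbd t (u t)
          _ ≤ K t * ‖u tm‖ := mul_le_mul_of_nonneg_left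
              (htmax ⟨ht.1, ht.2.trans htms⟩) (hK0 t)
      have hnormint : ‖∫ t in x₀..tm, g t‖ ≤ (∫ t in x₀..tm, K t) * ‖u tm‖ := by
        refine (intervalIntegral.norm_integral_le_integral_norm hx₀tm).trans ?_
        rw [← intervalIntegral.integral_mul_const]
        exact intervalIntegral.integral_mono_on hx₀tm gii.norm
          ((Kii x₀ tm hx₀0 hx₀tm (htms.trans hsN)).mul_const _) hKg
      have hKsmall : (∫ t in x₀..tm, K t) < 1/2 := by
        have h1 : F tm - F x₀ = ∫ t in x₀..tm, K t :=
          intervalIntegral.integral_interval_sub_left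
            (Kii 0 tm le_rfl htm0 (htms.trans hsN)) (Kii 0 x₀ le_rfl hx₀0 hx₀N)
        have h2 := hFnear tm hx₀tm (htms.trans hsc.le)
        have h3 := hFnear x₀ le_rfl hx₀c.le
        rw [abs_sub_lt_iff] at h2 h3
        linarith [h2.1, h2.2, h3.1, h3.2]
      have htm2 : ‖u tm‖ ≤ 2 * ‖u x₀‖ := by
        have h4 : ‖u tm‖ ≤ ‖u x₀‖ + (∫ t in x₀..tm, K t) * ‖u tm‖ := by
          calc ‖u tm‖ = ‖u x₀ + ∫ t in x₀..tm, g t‖ := by rw [hiu]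
            _ ≤ ‖u x₀‖ + ‖∫ t in x₀..tm, g t‖ := norm_add_le _ _
            _ ≤ ‖u x₀‖ + (∫ t in x₀..tm, K t) * ‖u tm‖ := add_le_add_right hnormint _
        nlinarith [norm_nonneg (u tm), norm_nonneg (u x₀), hKsmall,
          mul_le_mul_of_nonneg_right hKsmall.le (norm_nonneg (u tm))]
      exact le_trans (htmax ⟨hx₀s, le_rfl⟩) htm2
    obtain ⟨C₀, hC₀⟩ := isCompact_Icc.exists_bound_of_continuousOn (hcont x₀ hx₀S)
    set B : ℝ := max C₀ (2 * ‖u x₀‖) with hBdef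
    have hB : ∀ t ∈ Ioo (0:ℝ) c, ‖u t‖ ≤ B := by
      intro t ht
      rcases le_or_gt t x₀ with hle | hlt
      · exact le_trans (hC₀ t ⟨ht.1.le, hle⟩) (le_max_left _ _)
      · exact le_trans (hbd2 t hlt.le ht.2) (le_max_right _ _)
    have hucIco : ContinuousOn u (Ico 0 c) := by
      intro t ht
      obtain ⟨r, hr1, hr2⟩ := exists_between ht.2
      have hrS : r ∈ S := hmem r (ht.1.trans hr1.le) hr2
      have h1 : ContinuousWithinAt u (Icc 0 r) t := (hcont r hrS) t ⟨ht.1, hr1.le⟩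
      refine h1.mono_of_mem_nhdsWithin ?_
      rw [mem_nhdsWithin]
      exact ⟨Iio r, isOpen_Iio, hr1, fun y hy => ⟨hy.2.1, hy.1.le⟩⟩
    have hum : AEStronglyMeasurable u (volume.restrict (Ioo 0 c)) :=
      (hucIco.mono Ioo_subset_Ico_self).aestronglyMeasurable measurableSet_Ioo
    have hgm := aesm_mulVec M hmeas hum
    have hgio : IntegrableOn g (Ioo 0 c) := by
      refine Integrable.mono'
        ((hKint.mono_set fun t ht => ⟨ht.1.le, ht.2.le.trans hcN⟩).mul_const B) hgm ?_
      filter_upwards [ae_restrict_mem measurableSet_Ioo] with t ht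
      exact le_trans (hKbd t (u t)) (mul_le_mul_of_nonneg_left (hB t ht) (hK0 t))
    exact ⟨hcmem, hgio.congr_set_ae Ioo_ae_eq_Ioc.symm⟩
  have hNS : N ∈ S := by
    rcases eq_or_lt_of_le hcN with hceq | hclt
    · rw [← hceq]; exact hcS
    have huconst : ∀ x ∈ Ioc c N, u x = u 0 := by
      intro x hx
      have h0x : (0:ℝ) ≤ x := hc0.trans hx.1.le
      have hni : ¬ IntervalIntegrable g volume 0 x := by
        rw [intervalIntegrable_iff, uIoc_of_le h0x]
        intro hcontra
        have hxS : x ∈ S := ⟨⟨h0x, hx.2⟩, hcontra⟩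
        exact absurd (le_csSup hSb hxS) (not_le.mpr hx.1)
      rw [hu x ⟨h0x, hx.2⟩, intervalIntegral.integral_undef hni, add_zero]
    have h2 : IntegrableOn g (Ioc c N) := by
      have hconst : IntegrableOn (fun t => (M t).mulVec (u 0)) (Ioc c N) :=
        integrableOn_mulVec_const M hmeas
          (hKint.mono_set fun t ht => ⟨(hc0.trans_lt ht.1).le, ht.2⟩) (u 0)
      exact hconst.congr_fun (fun x hx => by rw [hgdef]; simp only; rw [huconst x hx])
        measurableSet_Ioc
    have h3 : IntegrableOn g (Ioc 0 c ∪ Ioc c N) := hcS.2.union h2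
    rw [Ioc_union_Ioc_eq_Ioc hc0 hcN] at h3
    exact ⟨⟨hN, le_rfl⟩, h3⟩
  exact ⟨hcont N hNS, hNS.2⟩

lemma vecMulVec_mulVec' (u v r : Fin 2 → ℂ) :
    (Matrix.vecMulVec u v).mulVec r = (v ⬝ᵥ r) • u := by
  funext i
  simp only [Matrix.mulVec, dotProduct, Matrix.vecMulVec_apply, Pi.smul_apply,
    smul_eq_mul, Finset.sum_mul]
  exact Finset.sum_congr rfl fun j _ => by ring

/-- Green's function lemma on `[0,N]`: with `f, w` solutions for `z`, `f̃, w̃` solutions for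
`z̄` satisfying `f w̃* − w f̃* = J`, the function
`y(x) = f(x)∫₀ˣ w̃*Hh + w(x)∫ₓᴺ f̃*Hh` solves `Jy' = zHy − Hh` on `[0,N]`. -/
theorem statement6 (N : ℝ) (hN : 0 < N) (H : ℝ → Matrix (Fin 2) (Fin 2) ℂ)
    (hmeas : ∀ i j, Measurable fun x => H x i j)
    (hpsd : ∀ᵐ x ∂(volume.restrict (Set.Icc (0:ℝ) N)), (H x).PosSemidef)
    (hint : ∀ i j, IntegrableOn (fun x => H x i j) (Set.Icc (0:ℝ) N))
    (z : ℂ) (f w ft wt : ℝ → Fin 2 → ℂ)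
    (hf : IsSolutionOn N H z f) (hw : IsSolutionOn N H z w)
    (hft : IsSolutionOn N H (starRingEnd ℂ z) ft)
    (hwt : IsSolutionOn N H (starRingEnd ℂ z) wt)
    (hJ : ∀ x ∈ Set.Icc (0:ℝ) N,
      vecMulVec (f x) (star (wt x)) - vecMulVec (w x) (star (ft x)) = Jmat)
    (h : ℝ → Fin 2 → ℂ) (hhm : Measurable h)
    (hint1 : IntegrableOn (fun t => star (wt t) ⬝ᵥ (H t).mulVec (h t)) (Set.Icc (0:ℝ) N))
    (hint2 : IntegrableOn (fun t => star (ft t) ⬝ᵥ (H t).mulVec (h t)) (Set.Icc (0:ℝ) N))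
    (y : ℝ → Fin 2 → ℂ)
    (hy : ∀ x ∈ Set.Icc (0:ℝ) N, y x =
      (∫ t in (0:ℝ)..x, star (wt t) ⬝ᵥ (H t).mulVec (h t)) • f x +
      (∫ t in x..N, star (ft t) ⬝ᵥ (H t).mulVec (h t)) • w x) :
    ∀ x ∈ Set.Icc (0:ℝ) N, y x =
      y 0 + ∫ t in (0:ℝ)..x, (-Jmat).mulVec (z • (H t).mulVec (y t) - (H t).mulVec (h t)) := by
  intro x hx
  have hN0 : (0:ℝ) ≤ N := hN.le
  set a : ℝ → ℂ := fun t => star (wt t) ⬝ᵥ (H t).mulVec (h t) with hadef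
  set b : ℝ → ℂ := fun t => star (ft t) ⬝ᵥ (H t).mulVec (h t) with hbdef
  set Mz : ℝ → Matrix (Fin 2) (Fin 2) ℂ := fun t => (-z) • (Jmat * H t) with hMzdef
  have hMzentry : ∀ i j, (fun t => Mz t i j) = fun t => (-z) * ∑ k, Jmat i k * H t k j := by
    intro i j; funext t
    simp [hMzdef, Matrix.smul_apply, Matrix.mul_apply, smul_eq_mul]
  have hMzmeas : ∀ i j, Measurable fun t => Mz t i j := by
    intro i j
    rw [hMzentry i j]
    exact (Finset.measurable_sum _ fun k _ => (hmeas k j).const_mul _).const_mul _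
  have hMzint : ∀ i j, IntegrableOn (fun t => Mz t i j) (Icc 0 N) := by
    intro i j
    rw [hMzentry i j]
    exact (integrable_finset_sum _ fun k _ => ((hint k j).const_mul _)).const_mul _
  have hsol : ∀ (v : ℝ → Fin 2 → ℂ), IsSolutionOn N H z v →
      ∀ x' ∈ Icc (0:ℝ) N, v x' = v 0 + ∫ t in (0:ℝ)..x', (Mz t).mulVec (v t) := by
    intro v hv x' hx'
    rw [hv x' hx']
    have h1 : (∫ t in (0:ℝ)..x', (Mz t).mulVec (v t))
        = ∫ t in (0:ℝ)..x', (-z) • (Jmat * H t).mulVec (v t) := by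
      refine intervalIntegral.integral_congr fun t _ => ?_
      rw [hMzdef]
      exact Matrix.smul_mulVec _ _ _
    rw [h1, intervalIntegral.integral_smul, neg_smul, ← sub_eq_add_neg]
  obtain ⟨hfc, hfint⟩ := bootstrap N hN0 Mz hMzmeas hMzint f (hsol f hf)
  obtain ⟨hwc, hwint⟩ := bootstrap N hN0 Mz hMzmeas hMzint w (hsol w hw)
  set φf : ℝ → Fin 2 → ℂ := fun t => (Mz t).mulVec (f t) with hφfdef
  set φw : ℝ → Fin 2 → ℂ := fun t => (Mz t).mulVec (w t) with hφwdef
  have haint : IntegrableOn a (Ioc 0 N) := hint1.mono_set Ioc_subset_Icc_self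
  have hbint : IntegrableOn b (Ioc 0 N) := hint2.mono_set Ioc_subset_Icc_self
  have hbii : ∀ r, 0 ≤ r → r ≤ N → IntervalIntegrable b volume 0 r := fun r h1 h2 =>
    ii h1 _ (hbint.mono_set (Ioc_subset_Ioc_right h2))
  have hy' : ∀ s ∈ Icc (0:ℝ) N, y s = (∫ t in (0:ℝ)..s, a t) • f s
      + ((∫ t in (0:ℝ)..N, b t) - ∫ t in (0:ℝ)..s, b t) • w s := by
    intro s hs
    rw [hy s hs,
      ← intervalIntegral.integral_interval_sub_left (hbii N hN0 le_rfl) (hbii s hs.1 hs.2)]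
  have hy0 : y 0 = (∫ t in (0:ℝ)..N, b t) • w 0 := by
    rw [hy 0 ⟨le_rfl, hN0⟩, intervalIntegral.integral_same, zero_smul, zero_add]
  have hx0 : 0 ≤ x := hx.1
  have hIccsub : Icc (0:ℝ) x ⊆ Icc 0 N := Icc_subset_Icc le_rfl hx.2
  have hIocsub : Ioc (0:ℝ) x ⊆ Ioc 0 N := Ioc_subset_Ioc_right hx.2
  have haintx : IntegrableOn a (Ioc 0 x) := haint.mono_set hIocsub
  have hbintx : IntegrableOn b (Ioc 0 x) := hbint.mono_set hIocsub
  have hfintx : IntegrableOn φf (Ioc 0 x) := hfint.mono_set hIocsub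
  have hwintx : IntegrableOn φw (Ioc 0 x) := hwint.mono_set hIocsub
  have hAcont : ContinuousOn (fun s => ∫ t in (0:ℝ)..s, a t) (Icc 0 x) := by
    have h1 : IntegrableOn a (uIcc 0 x) := by
      rw [uIcc_of_le hx0]; exact (integrableOn_Icc_iff_integrableOn_Ioc).mpr haintx
    have h2 := intervalIntegral.continuousOn_primitive_interval h1
    rwa [uIcc_of_le hx0] at h2
  have hBcont : ContinuousOn (fun s => (∫ t in (0:ℝ)..N, b t) - ∫ t in (0:ℝ)..s, b t)
      (Icc 0 x) := by
    have h1 : IntegrableOn b (uIcc 0 x) := by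
      rw [uIcc_of_le hx0]; exact (integrableOn_Icc_iff_integrableOn_Ioc).mpr hbintx
    have h2 := (continuousOn_const (c := ∫ t in (0:ℝ)..N, b t)).sub (intervalIntegral.continuousOn_primitive_interval h1)
    rwa [uIcc_of_le hx0] at h2
  have hFa : ∀ s ∈ Icc (0:ℝ) x, (∫ t in (0:ℝ)..s, a t) = (0:ℂ) + ∫ t in (0:ℝ)..s, a t :=
    fun s _ => (zero_add _).symm
  have hFb : ∀ s ∈ Icc (0:ℝ) x, (∫ t in (0:ℝ)..N, b t) - (∫ t in (0:ℝ)..s, b t)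
      = (∫ t in (0:ℝ)..N, b t) + ∫ t in (0:ℝ)..s, -b t := by
    intro s _
    rw [intervalIntegral.integral_neg, sub_eq_add_neg]
  have P1 : (∫ t in (0:ℝ)..x, a t) • f x = (0:ℂ) • f 0
      + ∫ t in (0:ℝ)..x, (a t • f t + (∫ s in (0:ℝ)..t, a s) • φf t) :=
    prod_rule x hx0 a φf haintx hfintx 0 (f 0) (fun s => ∫ t in (0:ℝ)..s, a t) f
      hFa (fun s hs => hsol f hf s (hIccsub hs))
  have P2 : ((∫ t in (0:ℝ)..N, b t) - ∫ t in (0:ℝ)..x, b t) • w x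
      = (∫ t in (0:ℝ)..N, b t) • w 0
      + ∫ t in (0:ℝ)..x, ((-b t) • w t
          + ((∫ t' in (0:ℝ)..N, b t') - ∫ s in (0:ℝ)..t, b s) • φw t) :=
    prod_rule x hx0 (fun t => -b t) φw hbintx.neg hwintx (∫ t in (0:ℝ)..N, b t) (w 0)
      (fun s => (∫ t in (0:ℝ)..N, b t) - ∫ t in (0:ℝ)..s, b t) w
      hFb (fun s hs => hsol w hw s (hIccsub hs))
  have i1 : IntervalIntegrable
      (fun t => a t • f t + (∫ s in (0:ℝ)..t, a s) • φf t) volume 0 x :=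
    ii hx0 _ ((intOn_smul_cont a f haintx (hfc.mono hIccsub)).add
      (cont_smul_intOn _ φf hAcont hfintx))
  have i2 : IntervalIntegrable (fun t => (-b t) • w t
      + ((∫ t' in (0:ℝ)..N, b t') - ∫ s in (0:ℝ)..t, b s) • φw t) volume 0 x :=
    ii hx0 _ ((intOn_smul_cont _ w hbintx.neg (hwc.mono hIccsub)).add
      (cont_smul_intOn _ φw hBcont hwintx))
  have hptwise : ∀ t ∈ Icc (0:ℝ) x,
      (-Jmat).mulVec (z • (H t).mulVec (y t) - (H t).mulVec (h t))
        = (a t • f t + (∫ s in (0:ℝ)..t, a s) • φf t)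
          + ((-b t) • w t + ((∫ t' in (0:ℝ)..N, b t') - ∫ s in (0:ℝ)..t, b s) • φw t) := by
    intro t ht
    have htN : t ∈ Icc (0:ℝ) N := hIccsub ht
    have e1 : a t • f t + (-b t) • w t = Jmat.mulVec ((H t).mulVec (h t)) := by
      rw [← hJ t htN, Matrix.sub_mulVec, vecMulVec_mulVec', vecMulVec_mulVec', neg_smul,
        ← sub_eq_add_neg]
    have e2 : (∫ s in (0:ℝ)..t, a s) • φf t
        + ((∫ t' in (0:ℝ)..N, b t') - ∫ s in (0:ℝ)..t, b s) • φw t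
        = (-z) • Jmat.mulVec ((H t).mulVec (y t)) := by
      rw [hy' t htN, hφfdef, hφwdef]
      simp only [hMzdef, Matrix.smul_mulVec, Matrix.mulVec_add, Matrix.mulVec_smul,
        Matrix.mulVec_mulVec]
      rw [smul_comm (∫ s in (0:ℝ)..t, a s) (-z), smul_comm
        ((∫ t' in (0:ℝ)..N, b t') - ∫ s in (0:ℝ)..t, b s) (-z), ← smul_add]
    calc (-Jmat).mulVec (z • (H t).mulVec (y t) - (H t).mulVec (h t))
        = -(z • Jmat.mulVec ((H t).mulVec (y t))) + Jmat.mulVec ((H t).mulVec (h t)) := by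
          simp only [Matrix.mulVec_sub, Matrix.mulVec_smul, Matrix.neg_mulVec, smul_neg,
            sub_neg_eq_add]
      _ = (a t • f t + (-b t) • w t)
          + ((∫ s in (0:ℝ)..t, a s) • φf t
            + ((∫ t' in (0:ℝ)..N, b t') - ∫ s in (0:ℝ)..t, b s) • φw t) := by
          rw [← neg_smul, ← e1, ← e2]; abel
      _ = _ := by abel
  have hcongr : (∫ t in (0:ℝ)..x, (-Jmat).mulVec (z • (H t).mulVec (y t) - (H t).mulVec (h t)))
      = ∫ t in (0:ℝ)..x, ((a t • f t + (∫ s in (0:ℝ)..t, a s) • φf t)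
          + ((-b t) • w t + ((∫ t' in (0:ℝ)..N, b t') - ∫ s in (0:ℝ)..t, b s) • φw t)) := by
    refine intervalIntegral.integral_congr fun t ht => ?_
    rw [uIcc_of_le hx0] at ht
    exact hptwise t ht
  rw [hy' x hx, P1, P2, hy0, hcongr, intervalIntegral.integral_add i1 i2, zero_smul, zero_add]
  abel
end
end

section
/- Fix N > 0. Suppose H(x) is positive semidefinite with tr H(x) ≤ 1 for a.e. x ∈ [0,N], and let G : [0,N] × [0,N] → M₂(ℂ) be measurable with ∫₀ᴺ∫₀ᴺ ‖G(x,t)‖² dx dt < ∞. Let μ ∈ ℂ with μ ≠ 0 and let f : [0,N] → ℂ² be square integrable (with respect to Lebesgue measure). Then the following are equivalent: (1) ∫₀ᴺ H(x)^{1/2} G(x,t) H(t)^{1/2} f(t) dt = μ f(x) for a.e. x ∈ [0,N]; (2) there exists a measurable y : [0,N] → ℂ² with ∫₀ᴺ y(t)* H(t) y(t) dt < ∞ such that f(x) = H(x)^{1/2} y(x) for a.e. x and H(x)^{1/2} ( ∫₀ᴺ G(x,t) H(t) y(t) dt − μ y(x) ) = 0 for a.e. x ∈ [0,N]. -/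
open MeasureTheory Matrix Set
open scoped ComplexOrder

noncomputable section

/-- The operator norm of a `2×2` complex matrix, acting on Euclidean space `ℂ²`. -/
def opNorm (A : Matrix (Fin 2) (Fin 2) ℂ) : ℝ := ‖Matrix.toEuclideanCLM (𝕜 := ℂ) A‖


lemma key_identity (A : Matrix (Fin 2) (Fin 2) ℂ) (v : Fin 2 → ℂ) :
    star v ⬝ᵥ A.mulVec v
      + star (![star (v 1), -star (v 0)]) ⬝ᵥ A.mulVec ![star (v 1), -star (v 0)]
      = A.trace * (star v ⬝ᵥ v) := by
  simp only [dotProduct, Matrix.mulVec, Matrix.trace, Matrix.diag, Fin.sum_univ_two,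
    Pi.star_apply, Matrix.cons_val_zero, Matrix.cons_val_one, Matrix.head_cons,
    star_star, star_neg, dotProduct]
  ring

lemma dot_self_eq (u : Fin 2 → ℂ) : star u ⬝ᵥ u = ((‖u 0‖^2 + ‖u 1‖^2 : ℝ) : ℂ) := by
  simp only [dotProduct, Fin.sum_univ_two, Pi.star_apply, Complex.star_def]
  rw [mul_comm (starRingEnd ℂ (u 0)), mul_comm (starRingEnd ℂ (u 1)), Complex.mul_conj,
    Complex.mul_conj]
  simp only [Complex.normSq_eq_norm_sq]
  push_cast
  ring

lemma herm_sq (B : Matrix (Fin 2) (Fin 2) ℂ) (hB : B.IsHermitian) (v : Fin 2 → ℂ) :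
    star (B.mulVec v) ⬝ᵥ B.mulVec v = star v ⬝ᵥ (B * B).mulVec v := by
  rw [Matrix.star_mulVec, ← Matrix.dotProduct_mulVec, Matrix.mulVec_mulVec, hB.eq]

lemma quad_le (A : Matrix (Fin 2) (Fin 2) ℂ) (hA : A.PosSemidef) (htr : A.trace.re ≤ 1)
    (v : Fin 2 → ℂ) : (star v ⬝ᵥ A.mulVec v).re ≤ ‖v 0‖ ^ 2 + ‖v 1‖ ^ 2 := by
  set w : Fin 2 → ℂ := ![star (v 1), -star (v 0)] with hw
  have h0 : 0 ≤ (star w ⬝ᵥ A.mulVec w).re := (Complex.nonneg_iff.mp (hA.dotProduct_mulVec_nonneg w)).1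
  have hid := key_identity A v
  have hs := dot_self_eq v
  have hre : (A.trace * (star v ⬝ᵥ v)).re = A.trace.re * (‖v 0‖ ^ 2 + ‖v 1‖ ^ 2) := by
    rw [hs, mul_comm, Complex.re_ofReal_mul, mul_comm]
  have h1 : (star v ⬝ᵥ A.mulVec v).re
      = A.trace.re * (‖v 0‖ ^ 2 + ‖v 1‖ ^ 2) - (star w ⬝ᵥ A.mulVec w).re := by
    have := congrArg Complex.re hid
    simp only [Complex.add_re] at this
    rw [hre] at this
    linarith
  have hvnn : (0:ℝ) ≤ ‖v 0‖ ^ 2 + ‖v 1‖ ^ 2 := by positivity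
  nlinarith [mul_le_of_le_one_left hvnn htr]

lemma mulVec_norm_le_two {B A : Matrix (Fin 2) (Fin 2) ℂ} (hB : B.PosSemidef)
    (hBB : B * B = A) (htr : A.trace.re ≤ 1) (v : Fin 2 → ℂ) :
    ‖B.mulVec v‖ ≤ 2 * ‖v‖ := by
  have hApsd : A.PosSemidef := by
    have := Matrix.posSemidef_conjTranspose_mul_self B
    rwa [hB.1.eq, hBB] at this
  set u : Fin 2 → ℂ := B.mulVec v with hu
  have hq : (star u ⬝ᵥ u).re = ‖u 0‖ ^ 2 + ‖u 1‖ ^ 2 := by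
    rw [dot_self_eq, Complex.ofReal_re]
  have h2 : ‖u 0‖ ^ 2 + ‖u 1‖ ^ 2 ≤ ‖v 0‖ ^ 2 + ‖v 1‖ ^ 2 := by
    rw [← hq, hu, herm_sq B hB.1 v, hBB]
    exact quad_le A hApsd htr v
  have hv0 : ‖v 0‖ ≤ ‖v‖ := norm_le_pi_norm v 0
  have hv1 : ‖v 1‖ ≤ ‖v‖ := norm_le_pi_norm v 1
  rw [pi_norm_le_iff_of_nonneg (by positivity)]
  intro i
  have hi : ‖u i‖ ^ 2 ≤ ‖u 0‖ ^ 2 + ‖u 1‖ ^ 2 := by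
    fin_cases i <;> simp <;> positivity
  have h3 : ‖u i‖ ^ 2 ≤ (2 * ‖v‖) ^ 2 := by
    nlinarith [norm_nonneg (v 0), norm_nonneg (v 1), norm_nonneg v]
  exact (pow_le_pow_iff_left₀ (norm_nonneg _) (by positivity) two_ne_zero).mp h3

lemma opnorm_mulVec (A : Matrix (Fin 2) (Fin 2) ℂ) (v : Fin 2 → ℂ) :
    ‖A.mulVec v‖ ≤ 2 * opNorm A * ‖v‖ := by
  set u : EuclideanSpace ℂ (Fin 2) := (WithLp.equiv 2 _).symm v with hu
  have happ : Matrix.toEuclideanCLM (𝕜 := ℂ) A u = (WithLp.equiv 2 _).symm (A.mulVec v) := by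
    rw [hu]; rfl
  have hnormu : ‖u‖ ≤ 2 * ‖v‖ := by
    rw [hu, EuclideanSpace.norm_eq]
    have : ∑ i, ‖(WithLp.equiv 2 (Fin 2 → ℂ)).symm v i‖ ^ 2 ≤ (2 * ‖v‖) ^ 2 := by
      simp only [WithLp.equiv_symm_apply, WithLp.ofLp_toLp, PiLp.toLp_apply, Fin.sum_univ_two]
      nlinarith [norm_le_pi_norm v 0, norm_le_pi_norm v 1, norm_nonneg (v 0),
        norm_nonneg (v 1), norm_nonneg v]
    calc Real.sqrt (∑ i, ‖(WithLp.equiv 2 (Fin 2 → ℂ)).symm v i‖ ^ 2)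
        ≤ Real.sqrt ((2 * ‖v‖) ^ 2) := Real.sqrt_le_sqrt this
      _ = 2 * ‖v‖ := Real.sqrt_sq (by positivity)
  have hcomp : ∀ i, ‖(A.mulVec v) i‖ ≤ ‖Matrix.toEuclideanCLM (𝕜 := ℂ) A u‖ := by
    intro i
    rw [happ, EuclideanSpace.norm_eq]
    have h1 : ‖(A.mulVec v) i‖ ^ 2 ≤ ∑ j, ‖(WithLp.equiv 2 (Fin 2 → ℂ)).symm (A.mulVec v) j‖ ^ 2 := by
      simp only [WithLp.equiv_symm_apply, WithLp.ofLp_toLp, PiLp.toLp_apply, Fin.sum_univ_two]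
      fin_cases i <;> simp <;> positivity
    have := Real.sqrt_le_sqrt h1
    rwa [Real.sqrt_sq (norm_nonneg _)] at this
  have hle : ‖Matrix.toEuclideanCLM (𝕜 := ℂ) A u‖ ≤ opNorm A * ‖u‖ :=
    ContinuousLinearMap.le_opNorm _ _
  have hop : (0:ℝ) ≤ opNorm A := norm_nonneg _
  rw [pi_norm_le_iff_of_nonneg (mul_nonneg (mul_nonneg (by norm_num) hop) (norm_nonneg v))]
  intro i
  calc ‖(A.mulVec v) i‖ ≤ opNorm A * ‖u‖ := (hcomp i).trans hle
    _ ≤ opNorm A * (2 * ‖v‖) := by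
        have : (0:ℝ) ≤ opNorm A := norm_nonneg _
        nlinarith
    _ = 2 * opNorm A * ‖v‖ := by ring

lemma opNorm_continuous : Continuous fun A : Fin 2 → Fin 2 → ℂ => opNorm (Matrix.of A) := by
  have h : Continuous fun A : Fin 2 → Fin 2 → ℂ =>
      (Matrix.toEuclideanCLM (𝕜 := ℂ) (Matrix.of A) :
        EuclideanSpace ℂ (Fin 2) →L[ℂ] EuclideanSpace ℂ (Fin 2)) := by
    let L : (Fin 2 → Fin 2 → ℂ) →ₗ[ℂ]
        (EuclideanSpace ℂ (Fin 2) →L[ℂ] EuclideanSpace ℂ (Fin 2)) :=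
      { toFun := fun A => Matrix.toEuclideanCLM (𝕜 := ℂ) (Matrix.of A)
        map_add' := fun A B => map_add (Matrix.toEuclideanCLM (𝕜 := ℂ)) (Matrix.of A) (Matrix.of B)
        map_smul' := fun c A => map_smul (Matrix.toEuclideanCLM (𝕜 := ℂ)) c (Matrix.of A) }
    exact L.continuous_of_finiteDimensional
  exact h.norm

lemma integral_mulVec {m : Measure ℝ} (A : Matrix (Fin 2) (Fin 2) ℂ) {F : ℝ → Fin 2 → ℂ}
    (hF : Integrable F m) : ∫ t, A.mulVec (F t) ∂m = A.mulVec (∫ t, F t ∂m) := by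
  have := (LinearMap.toContinuousLinearMap (Matrix.mulVecLin A)).integral_comp_comm hF
  simpa [Matrix.mulVecLin_apply] using this

lemma pi_norm_sq_le (u : Fin 2 → ℂ) : ‖u‖ ^ 2 ≤ ‖u 0‖ ^ 2 + ‖u 1‖ ^ 2 := by
  have h : ‖u‖ ≤ Real.sqrt (‖u 0‖ ^ 2 + ‖u 1‖ ^ 2) := by
    rw [pi_norm_le_iff_of_nonneg (Real.sqrt_nonneg _)]
    intro i
    have h1 : ‖u i‖ ^ 2 ≤ ‖u 0‖ ^ 2 + ‖u 1‖ ^ 2 := by fin_cases i <;> simp <;> positivity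
    have := Real.sqrt_le_sqrt h1
    rwa [Real.sqrt_sq (norm_nonneg _)] at this
  have h2 : Real.sqrt (‖u 0‖ ^ 2 + ‖u 1‖ ^ 2) ^ 2 = ‖u 0‖ ^ 2 + ‖u 1‖ ^ 2 :=
    Real.sq_sqrt (by positivity)
  nlinarith [norm_nonneg u, Real.sqrt_nonneg (‖u 0‖ ^ 2 + ‖u 1‖ ^ 2)]

lemma measurable_mulVec {α : Type*} [MeasurableSpace α] {M : α → Matrix (Fin 2) (Fin 2) ℂ}
    {Z : α → Fin 2 → ℂ} (hM : ∀ i j, Measurable fun t => M t i j) (hZ : Measurable Z) :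
    Measurable fun t => (M t).mulVec (Z t) := by
  apply measurable_pi_lambda; intro i
  simp only [Matrix.mulVec, dotProduct, Fin.sum_univ_two]
  exact ((hM i 0).mul ((measurable_pi_apply 0).comp hZ)).add
    ((hM i 1).mul ((measurable_pi_apply 1).comp hZ))

lemma measurable_mul_entries {α : Type*} [MeasurableSpace α]
    {A B : α → Matrix (Fin 2) (Fin 2) ℂ} (hA : ∀ i j, Measurable fun t => A t i j)
    (hB : ∀ i j, Measurable fun t => B t i j) :
    ∀ i j, Measurable fun t => (A t * B t) i j := by
  intro i j
  simp only [Matrix.mul_apply, Fin.sum_univ_two]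
  exact ((hA i 0).mul (hB 0 j)).add ((hA i 1).mul (hB 1 j))

/-- Correspondence of eigenfunctions: for `μ ≠ 0` and `f ∈ L²([0,N],ℂ²)`,
`∫₀ᴺ H(x)^{1/2} G(x,t) H(t)^{1/2} f(t) dt = μ f(x)` a.e. iff there is `y ∈ L²(H,[0,N])`
with `f = H^{1/2} y` a.e. and `H(x)^{1/2}(∫₀ᴺ G(x,t)H(t)y(t)dt − μ y(x)) = 0` a.e. -/
theorem statement13 (N : ℝ) (hN : 0 < N) (H Hsqrt : ℝ → Matrix (Fin 2) (Fin 2) ℂ)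
    (hmeas : ∀ i j, Measurable fun x => H x i j)
    (hpsd : ∀ᵐ x ∂(volume.restrict (Set.Icc (0:ℝ) N)),
      (H x).PosSemidef ∧ (H x).trace.re ≤ 1)
    (hint : ∀ i j, IntegrableOn (fun x => H x i j) (Set.Icc (0:ℝ) N))
    (hsq_meas : ∀ i j, Measurable fun x => Hsqrt x i j)
    (hsq : ∀ᵐ x ∂(volume.restrict (Set.Icc (0:ℝ) N)),
      (Hsqrt x).PosSemidef ∧ Hsqrt x * Hsqrt x = H x)
    (G : ℝ → ℝ → Matrix (Fin 2) (Fin 2) ℂ)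
    (hGmeas : ∀ i j, Measurable fun p : ℝ × ℝ => G p.1 p.2 i j)
    (hG : IntegrableOn (fun p : ℝ × ℝ => (opNorm (G p.1 p.2)) ^ 2)
      (Set.Icc (0:ℝ) N ×ˢ Set.Icc (0:ℝ) N))
    (μ : ℂ) (hμ : μ ≠ 0) (f : ℝ → Fin 2 → ℂ)
    (hf : MemLp f 2 (volume.restrict (Set.Icc (0:ℝ) N))) :
    (∀ᵐ x ∂(volume.restrict (Set.Icc (0:ℝ) N)),
        (∫ t in Set.Icc (0:ℝ) N, (Hsqrt x * G x t * Hsqrt t).mulVec (f t)) = μ • f x) ↔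
      (∃ y : ℝ → Fin 2 → ℂ, Measurable y ∧
        IntegrableOn (fun t => star (y t) ⬝ᵥ (H t).mulVec (y t)) (Set.Icc (0:ℝ) N) ∧
        (∀ᵐ x ∂(volume.restrict (Set.Icc (0:ℝ) N)), f x = (Hsqrt x).mulVec (y x)) ∧
        (∀ᵐ x ∂(volume.restrict (Set.Icc (0:ℝ) N)),
          (Hsqrt x).mulVec
            ((∫ t in Set.Icc (0:ℝ) N, (G x t * H t).mulVec (y t)) - μ • y x) = 0)) := by
  set ν := volume.restrict (Set.Icc (0:ℝ) N) with hνdef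
  -- basic measurability
  have hGe : ∀ x : ℝ, ∀ i j, Measurable fun t => G x t i j := fun x i j =>
    (hGmeas i j).comp measurable_prodMk_left
  have hGm : ∀ x : ℝ, Measurable fun t => (fun i j => G x t i j : Fin 2 → Fin 2 → ℂ) := fun x =>
    measurable_pi_lambda _ fun i => measurable_pi_lambda _ fun j => hGe x i j
  have hGnorm_meas : ∀ x : ℝ, Measurable fun t => opNorm (G x t) := fun x =>
    opNorm_continuous.measurable.comp (hGm x)
  -- a.e. square-integrability of the kernel slices
  have hGsq_ae : ∀ᵐ x ∂ν, MemLp (fun t => opNorm (G x t)) 2 ν := by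
    have h1 : Integrable (fun p : ℝ × ℝ => opNorm (G p.1 p.2) ^ 2) (ν.prod ν) := by
      rw [hνdef, Measure.prod_restrict, ← Measure.volume_eq_prod]
      exact hG
    filter_upwards [h1.prod_right_ae] with x hx
    exact (memLp_two_iff_integrable_sq ((hGnorm_meas x).aestronglyMeasurable)).mpr hx
  -- a.e. norm bound on Hsqrt
  have hHsnorm : ∀ᵐ t ∂ν, ∀ v : Fin 2 → ℂ, ‖(Hsqrt t).mulVec v‖ ≤ 2 * ‖v‖ := by
    filter_upwards [hpsd, hsq] with t h1 h2
    exact fun v => mulVec_norm_le_two h2.1 h2.2 h1.2 v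
  -- a general integrability criterion
  have hIntGen : ∀ (x : ℝ) (M : ℝ → Matrix (Fin 2) (Fin 2) ℂ) (Z : ℝ → Fin 2 → ℂ)
      (ρ : ℝ → ℝ) (c : ℝ), (∀ i j, Measurable fun t => M t i j) → Measurable Z →
      MemLp ρ 2 ν → MemLp (fun t => opNorm (G x t)) 2 ν →
      (∀ᵐ t ∂ν, ‖(M t).mulVec (Z t)‖ ≤ c * ρ t) →
      Integrable (fun t => (G x t * M t).mulVec (Z t)) ν := by
    intro x M Z ρ c hMm hZm hρ hGx hbd
    have hmaj : Integrable (fun t => opNorm (G x t) * ((2 * c) * ρ t)) ν := by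
      have hmemb : MemLp ((fun t => opNorm (G x t)) • (fun t => (2 * c) * ρ t)) 1 ν :=
        MemLp.smul (r := 1) (hρ.const_mul (2 * c)) hGx
      exact memLp_one_iff_integrable.mp hmemb
    apply hmaj.mono'
    · exact (measurable_mulVec (measurable_mul_entries (hGe x) hMm) hZm).aestronglyMeasurable
    · filter_upwards [hbd] with t ht
      have h0 : (0:ℝ) ≤ opNorm (G x t) := norm_nonneg _
      calc ‖(G x t * M t).mulVec (Z t)‖
          = ‖(G x t).mulVec ((M t).mulVec (Z t))‖ := by rw [Matrix.mulVec_mulVec]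
        _ ≤ 2 * opNorm (G x t) * ‖(M t).mulVec (Z t)‖ := opnorm_mulVec _ _
        _ ≤ 2 * opNorm (G x t) * (c * ρ t) :=
            mul_le_mul_of_nonneg_left ht (by nlinarith)
        _ = opNorm (G x t) * ((2 * c) * ρ t) := by ring
  constructor
  · intro h1
    obtain ⟨hg_sm, hfg⟩ : StronglyMeasurable (hf.1.mk f) ∧ f =ᵐ[ν] hf.1.mk f :=
      ⟨hf.1.stronglyMeasurable_mk, hf.1.ae_eq_mk⟩
    set g : ℝ → Fin 2 → ℂ := hf.1.mk f with hgdef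
    have hg_meas : Measurable g := hg_sm.measurable
    have hg2 : MemLp g 2 ν := hf.ae_eq hfg
    set y : ℝ → Fin 2 → ℂ := fun x => μ⁻¹ • ∫ t, (G x t * Hsqrt t).mulVec (g t) ∂ν with hy
    have hy_meas : Measurable y := by
      have hKmeas : Measurable fun p : ℝ × ℝ => (G p.1 p.2 * Hsqrt p.2).mulVec (g p.2) :=
        measurable_mulVec
          (measurable_mul_entries hGmeas (fun i j => (hsq_meas i j).comp measurable_snd))
          (hg_meas.comp measurable_snd)
      exact ((hKmeas.stronglyMeasurable.integral_prod_right').measurable).const_smul μ⁻¹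
    have hyint : ∀ᵐ x ∂ν, Integrable (fun t => (G x t * Hsqrt t).mulVec (g t)) ν := by
      filter_upwards [hGsq_ae] with x hx
      refine hIntGen x Hsqrt g (fun t => ‖g t‖) 2 hsq_meas hg_meas hg2.norm hx ?_
      filter_upwards [hHsnorm] with t ht using ht (g t)
    have ha : ∀ᵐ x ∂ν, f x = (Hsqrt x).mulVec (y x) := by
      filter_upwards [h1, hyint] with x hx hxint
      have e1 : (Hsqrt x).mulVec (y x)
          = μ⁻¹ • (Hsqrt x).mulVec (∫ t, (G x t * Hsqrt t).mulVec (g t) ∂ν) := by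
        rw [hy]; rw [Matrix.mulVec_smul]
      rw [e1, ← integral_mulVec _ hxint]
      have e2 : ∫ t, (Hsqrt x).mulVec ((G x t * Hsqrt t).mulVec (g t)) ∂ν
          = ∫ t, (Hsqrt x * G x t * Hsqrt t).mulVec (f t) ∂ν := by
        apply integral_congr_ae
        filter_upwards [hfg] with t ht
        rw [Matrix.mulVec_mulVec, ← mul_assoc, ht]
      rw [e2, hx, inv_smul_smul₀ hμ]
    have hkey : ∀ᵐ t ∂ν, ∀ x' : ℝ,
        (G x' t * H t).mulVec (y t) = (G x' t * Hsqrt t).mulVec (g t) := by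
      filter_upwards [hsq, ha, hfg] with t h2 hat hgt
      intro x'
      have e3 : (H t).mulVec (y t) = (Hsqrt t).mulVec (g t) := by
        rw [← h2.2, ← Matrix.mulVec_mulVec, ← hat, hgt]
      rw [← Matrix.mulVec_mulVec, e3, Matrix.mulVec_mulVec]
    have hbint : IntegrableOn (fun t => star (y t) ⬝ᵥ (H t).mulVec (y t)) (Set.Icc (0:ℝ) N) := by
      have hmaj : Integrable (fun t => 2 * ‖f t‖ ^ 2) ν := (hf.norm.integrable_sq).const_mul 2
      apply hmaj.mono'
      · have hdm : Measurable fun t => star (y t) ⬝ᵥ (H t).mulVec (y t) := by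
          have h0 := measurable_mulVec hmeas hy_meas
          simp only [dotProduct, Fin.sum_univ_two, Pi.star_apply]
          exact (((continuous_star.measurable.comp ((measurable_pi_apply 0).comp hy_meas)).mul
              ((measurable_pi_apply 0).comp h0)).add
            (((continuous_star.measurable.comp ((measurable_pi_apply 1).comp hy_meas)).mul
              ((measurable_pi_apply 1).comp h0))))
        exact hdm.aestronglyMeasurable
      · filter_upwards [ha, hsq] with t hat h2
        have e4 : star (y t) ⬝ᵥ (H t).mulVec (y t) = star (f t) ⬝ᵥ (f t) := by
          rw [← h2.2, ← herm_sq _ h2.1.1, ← hat]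
        rw [e4, dot_self_eq, Complex.norm_real, Real.norm_eq_abs, abs_of_nonneg (by positivity)]
        nlinarith [norm_le_pi_norm (f t) 0, norm_le_pi_norm (f t) 1,
          norm_nonneg (f t 0), norm_nonneg (f t 1), norm_nonneg (f t)]
    have hc : ∀ᵐ x ∂ν, (Hsqrt x).mulVec
        ((∫ t, (G x t * H t).mulVec (y t) ∂ν) - μ • y x) = 0 := by
      refine Filter.Eventually.of_forall fun x => ?_
      have e5 : ∫ t, (G x t * H t).mulVec (y t) ∂ν
          = ∫ t, (G x t * Hsqrt t).mulVec (g t) ∂ν :=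
        integral_congr_ae (hkey.mono fun t ht => ht x)
      have e6 : μ • y x = ∫ t, (G x t * Hsqrt t).mulVec (g t) ∂ν := by
        rw [hy]; exact smul_inv_smul₀ hμ _
      rw [e5, ← e6, sub_self, Matrix.mulVec_zero]
    exact ⟨y, hy_meas, hbint, ha, hc⟩
  · rintro ⟨y, hy_meas, hyH, hfy, hker⟩
    set w : ℝ → Fin 2 → ℂ := fun t => (Hsqrt t).mulVec (y t) with hwdef
    have hw_meas : Measurable w := measurable_mulVec hsq_meas hy_meas
    have hw2 : MemLp (fun t => ‖w t‖) 2 ν := by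
      rw [memLp_two_iff_integrable_sq (hw_meas.norm.aestronglyMeasurable)]
      have hre : Integrable (fun t => (star (y t) ⬝ᵥ (H t).mulVec (y t)).re) ν := hyH.re
      apply hre.mono'
      · exact ((hw_meas.norm).pow_const 2).aestronglyMeasurable
      · filter_upwards [hsq] with t h2
        have he : star (y t) ⬝ᵥ (H t).mulVec (y t) = star (w t) ⬝ᵥ (w t) := by
          rw [← h2.2, ← herm_sq _ h2.1.1]
        rw [Real.norm_eq_abs, abs_of_nonneg (by positivity), he, dot_self_eq,
          Complex.ofReal_re]
        exact (pi_norm_sq_le (w t))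
    have hHy : ∀ᵐ t ∂ν, ‖(H t).mulVec (y t)‖ ≤ 2 * ‖w t‖ := by
      filter_upwards [hsq, hHsnorm] with t h2 hsn
      rw [← h2.2, ← Matrix.mulVec_mulVec]
      exact hsn (w t)
    have hint2 : ∀ᵐ x ∂ν, Integrable (fun t => (G x t * H t).mulVec (y t)) ν := by
      filter_upwards [hGsq_ae] with x hx
      exact hIntGen x H y (fun t => ‖w t‖) 2 hmeas hy_meas hw2 hx hHy
    filter_upwards [hker, hfy, hint2] with x hkx hfx hix
    have e1 : ∫ t, (Hsqrt x * G x t * Hsqrt t).mulVec (f t) ∂ν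
        = ∫ t, (Hsqrt x).mulVec ((G x t * H t).mulVec (y t)) ∂ν := by
      apply integral_congr_ae
      filter_upwards [hfy, hsq] with t hft h2
      rw [hft, Matrix.mulVec_mulVec, Matrix.mulVec_mulVec]
      simp only [mul_assoc, h2.2]
    rw [e1, integral_mulVec _ hix]
    rw [Matrix.mulVec_sub, sub_eq_zero] at hkx
    rw [hkx, Matrix.mulVec_smul, ← hfx]
end
end
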